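/- Assume the project is PCL-indexable, i.e., conditions (PCLI1), (PCLI2) and (PCLI3) hold, and let p be an initial distribution with full support ℝ and ∫ w dp < ∞. Then for every z₀ ∈ ℝ: m*(z₀) = lim_{z → z₀, z ≠ z₀} (F(p,z) − F(p,z₀))/(G(p,z) − G(p,z₀)) = lim_{z → z₀, z ≠ z₀} (F(p,z) − F(p,z₀⁻))/(G(p,z) − G(p,z₀⁻)), where F(p,z₀⁻) and G(p,z₀⁻) denote the left limits of z ↦ F(p,z) and z ↦ G(p,z) at z₀ (the denominators are nonzero since z ↦ G(p,z) is strictly decreasing). -/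

import Mathlib

open MeasureTheory ProbabilityTheory Filter Topology Set

noncomputable section

/-- A restless bandit project: the model data (discount factor `β`, passive/active
Markov transition kernels `κ false`/`κ true`, reward `r` and resource consumption `c`),
Assumption 1 (the weighted sup-norm conditions for weight `w` and constants `M`, `γ`),
together with the threshold-policy performance metrics `F`, `G` (for `z`-policies,
active iff `x > z`), `Fm`, `Gm` (for `z⁻`-policies, active iff `x ≥ z`), and the
optimal value function `V lam` of the `lam`-price problem, each of which is the
(unique) `w`-bounded measurable solution of its fixed-point equation. -/
structure Bandit where
  β : ℝ
  κ : Bool → Kernel ℝ ℝ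
  r : ℝ → Bool → ℝ
  c : ℝ → Bool → ℝ
  w : ℝ → ℝ
  M : ℝ
  γ : ℝ
  F : ℝ → EReal → ℝ
  G : ℝ → EReal → ℝ
  Fm : ℝ → EReal → ℝ
  Gm : ℝ → EReal → ℝ
  V : ℝ → ℝ → ℝ
  hβ0 : 0 ≤ β
  hβ1 : β < 1
  hκ : ∀ a, IsMarkovKernel (κ a)
  hr_cont : ∀ a, Continuous fun x => r x a
  hc_cont : ∀ a, Continuous fun x => c x a
  hc0 : ∀ x, 0 ≤ c x false
  hc01 : ∀ x, c x false < c x true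
  hw_meas : Measurable w
  hw_one : ∀ x, 1 ≤ w x
  hM : 0 < M
  hβγ : β ≤ γ
  hγ1 : γ < 1
  hr_bd : ∀ x a, |r x a| ≤ M * w x
  hc_bd : ∀ x a, c x a ≤ M * w x
  hw_int : ∀ a x, Integrable w (κ a x)
  hw_drift : ∀ a x, β * ∫ y, w y ∂(κ a x) ≤ γ * w x
  hF_meas : ∀ z, Measurable fun x => F x z
  hG_meas : ∀ z, Measurable fun x => G x z
  hFm_meas : ∀ z, Measurable fun x => Fm x z
  hGm_meas : ∀ z, Measurable fun x => Gm x z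
  hV_meas : ∀ lam, Measurable (V lam)
  hF_bdd : ∀ z, ∃ C, ∀ x, |F x z| ≤ C * w x
  hG_bdd : ∀ z, ∃ C, ∀ x, |G x z| ≤ C * w x
  hFm_bdd : ∀ z, ∃ C, ∀ x, |Fm x z| ≤ C * w x
  hGm_bdd : ∀ z, ∃ C, ∀ x, |Gm x z| ≤ C * w x
  hV_bdd : ∀ lam, ∃ C, ∀ x, |V lam x| ≤ C * w x
  hF_eq : ∀ x z, F x z =
    r x (decide (z < (x : EReal))) +
      β * ∫ y, F y z ∂(κ (decide (z < (x : EReal))) x)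
  hG_eq : ∀ x z, G x z =
    c x (decide (z < (x : EReal))) +
      β * ∫ y, G y z ∂(κ (decide (z < (x : EReal))) x)
  hFm_eq : ∀ x z, Fm x z =
    r x (decide (z ≤ (x : EReal))) +
      β * ∫ y, Fm y z ∂(κ (decide (z ≤ (x : EReal))) x)
  hGm_eq : ∀ x z, Gm x z =
    c x (decide (z ≤ (x : EReal))) +
      β * ∫ y, Gm y z ∂(κ (decide (z ≤ (x : EReal))) x)
  hV_eq : ∀ lam x, V lam x =
    max (r x false - lam * c x false + β * ∫ y, V lam y ∂(κ false x))
        (r x true - lam * c x true + β * ∫ y, V lam y ∂(κ true x))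

/-- `ν` is the Lebesgue–Stieltjes measure of the (bounded nonincreasing
right-continuous) function `h`: `ν(z₁,z₂] = h z₁ - h z₂`. -/
def IsLSMeasureOfAnti (h : ℝ → ℝ) (ν : Measure ℝ) : Prop :=
  ∀ z₁ z₂ : ℝ, z₁ ≤ z₂ → ν (Set.Ioc z₁ z₂) = ENNReal.ofReal (h z₁ - h z₂)

/-- `ν` is the Lebesgue–Stieltjes measure of the (bounded nondecreasing
right-continuous) function `h`: `ν(z₁,z₂] = h z₂ - h z₁`. -/
def IsLSMeasureOfMono (h : ℝ → ℝ) (ν : Measure ℝ) : Prop :=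
  ∀ z₁ z₂ : ℝ, z₁ ≤ z₂ → ν (Set.Ioc z₁ z₂) = ENNReal.ofReal (h z₂ - h z₁)

/-- The real interval `(z₁, z₂] ⊆ ℝ` with extended-real endpoints. -/
def iocR (z₁ z₂ : EReal) : Set ℝ := {y : ℝ | z₁ < (y : EReal) ∧ (y : EReal) ≤ z₂}

/-- `t`-step distribution of the Markov chain with kernel `κ` and initial law `p`. -/
def kerIter (κ : Kernel ℝ ℝ) : ℕ → Measure ℝ → Measure ℝ
  | 0, p => p
  | (t + 1), p => (kerIter κ t p).bind fun x => κ x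

namespace Bandit

variable (P : Bandit)

/-- Marginal reward metric `f(x,z)` of the `z`-policy. -/
def f (x : ℝ) (z : EReal) : ℝ :=
  (P.r x true - P.r x false) +
    P.β * ((∫ y, P.F y z ∂(P.κ true x)) - ∫ y, P.F y z ∂(P.κ false x))

/-- Marginal resource metric `g(x,z)` of the `z`-policy. -/
def g (x : ℝ) (z : EReal) : ℝ :=
  (P.c x true - P.c x false) +
    P.β * ((∫ y, P.G y z ∂(P.κ true x)) - ∫ y, P.G y z ∂(P.κ false x))

/-- Marginal reward metric `f(x,z⁻)` of the `z⁻`-policy. -/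
def fm (x : ℝ) (z : EReal) : ℝ :=
  (P.r x true - P.r x false) +
    P.β * ((∫ y, P.Fm y z ∂(P.κ true x)) - ∫ y, P.Fm y z ∂(P.κ false x))

/-- Marginal resource metric `g(x,z⁻)` of the `z⁻`-policy. -/
def gm (x : ℝ) (z : EReal) : ℝ :=
  (P.c x true - P.c x false) +
    P.β * ((∫ y, P.Gm y z ∂(P.κ true x)) - ∫ y, P.Gm y z ∂(P.κ false x))

/-- Marginal productivity metric `m(x,z) = f(x,z)/g(x,z)`. -/
def m (x : ℝ) (z : EReal) : ℝ := P.f x z / P.g x z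

/-- Marginal productivity metric `m(x,z⁻) = f(x,z⁻)/g(x,z⁻)`. -/
def mm (x : ℝ) (z : EReal) : ℝ := P.fm x z / P.gm x z

/-- The marginal productivity (MP) index `m*(x) = m(x,x)`. -/
def mStar (x : ℝ) : ℝ := P.m x (x : EReal)

/-- The active action is `P_lam`-optimal at `x`. -/
def ActOpt (lam x : ℝ) : Prop :=
  P.r x false - lam * P.c x false + P.β * ∫ y, P.V lam y ∂(P.κ false x) ≤
    P.r x true - lam * P.c x true + P.β * ∫ y, P.V lam y ∂(P.κ true x)

/-- The passive action is `P_lam`-optimal at `x`. -/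
def PassOpt (lam x : ℝ) : Prop :=
  P.r x true - lam * P.c x true + P.β * ∫ y, P.V lam y ∂(P.κ true x) ≤
    P.r x false - lam * P.c x false + P.β * ∫ y, P.V lam y ∂(P.κ false x)

/-- The project is indexable with index `ν`. -/
def Indexable (ν : ℝ → ℝ) : Prop :=
  ∀ lam x, (P.ActOpt lam x ↔ lam ≤ ν x) ∧ (P.PassOpt lam x ↔ ν x ≤ lam)

/-- The `z`-policy is `P_lam`-optimal. -/
def ZPolicyOpt (z : EReal) (lam : ℝ) : Prop :=
  ∀ x, P.F x z - lam * P.G x z = P.V lam x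

/-- The `z⁻`-policy is `P_lam`-optimal. -/
def ZmPolicyOpt (z : EReal) (lam : ℝ) : Prop :=
  ∀ x, P.Fm x z - lam * P.Gm x z = P.V lam x

/-- The project is strongly threshold-indexable with index `ν`. -/
def StronglyThresholdIndexable (ν : ℝ → ℝ) : Prop :=
  P.Indexable ν ∧
    ∀ lam : ℝ, ∃ z : EReal, P.ZPolicyOpt z lam ∧ P.ZmPolicyOpt z lam

/-- PCL-indexability condition (PCLI1). -/
def PCLI1 : Prop := ∀ (x : ℝ) (z : EReal), 0 < P.g x z

/-- PCL-indexability condition (PCLI2). -/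
def PCLI2 : Prop :=
  Monotone P.mStar ∧ Continuous P.mStar ∧ BddBelow (Set.range P.mStar)

/-- PCL-indexability condition (PCLI3). -/
def PCLI3 : Prop :=
  ∀ x : ℝ, ∀ ν : Measure ℝ, IsLSMeasureOfAnti (fun z : ℝ => P.G x z) ν →
    ∀ z₁ z₂ : ℝ, z₁ < z₂ →
      P.F x z₂ - P.F x z₁ = -∫ z in Set.Ioc z₁ z₂, P.mStar z ∂ν

/-- The project is PCL-indexable. -/
def PCLIndexable : Prop := P.PCLI1 ∧ P.PCLI2 ∧ P.PCLI3

/-- Reward metric with initial distribution `p`. -/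
def Fp (p : Measure ℝ) (z : EReal) : ℝ := ∫ x, P.F x z ∂p

/-- Resource metric with initial distribution `p`. -/
def Gp (p : Measure ℝ) (z : EReal) : ℝ := ∫ x, P.G x z ∂p

/-- `z⁻`-policy reward metric with initial distribution `p`. -/
def Fmp (p : Measure ℝ) (z : EReal) : ℝ := ∫ x, P.Fm x z ∂p

/-- `z⁻`-policy resource metric with initial distribution `p`. -/
def Gmp (p : Measure ℝ) (z : EReal) : ℝ := ∫ x, P.Gm x z ∂p

/-- An admissible initial distribution: a probability measure with `∫ w dp < ∞`. -/
def IsInitDist (p : Measure ℝ) : Prop :=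
  IsProbabilityMeasure p ∧ Integrable P.w p

/-- The transition kernel of the `z`-policy (active iff `x > z`). -/
def thrKer (z : EReal) : Kernel ℝ ℝ :=
  haveI : DecidablePred (· ∈ {x : ℝ | z < (x : EReal)}) := Classical.decPred _
  Kernel.piecewise
    (show MeasurableSet {x : ℝ | z < (x : EReal)} from
      measurable_coe_real_ereal measurableSet_Ioi)
    (P.κ true) (P.κ false)

/-- The transition kernel of the `z⁻`-policy (active iff `x ≥ z`). -/
def thrKerM (z : EReal) : Kernel ℝ ℝ :=
  haveI : DecidablePred (· ∈ {x : ℝ | z ≤ (x : EReal)}) := Classical.decPred _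
  Kernel.piecewise
    (show MeasurableSet {x : ℝ | z ≤ (x : EReal)} from
      measurable_coe_real_ereal measurableSet_Ici)
    (P.κ true) (P.κ false)

/-- The (discounted) state occupation measure `μ_p^z` of the `z`-policy. -/
def occ (z : EReal) (p : Measure ℝ) : Measure ℝ :=
  Measure.sum fun t : ℕ => ENNReal.ofReal (P.β ^ t) • kerIter (P.thrKer z) t p

/-- The (discounted) state occupation measure `μ_p^{z⁻}` of the `z⁻`-policy. -/
def occM (z : EReal) (p : Measure ℝ) : Measure ℝ :=
  Measure.sum fun t : ℕ => ENNReal.ofReal (P.β ^ t) • kerIter (P.thrKerM z) t p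

end Bandit

/-- Finite-horizon reward metric `F_k(x,z)` (value iteration). -/
def Bandit.Fk (P : Bandit) : ℕ → ℝ → EReal → ℝ
  | 0, x, z => P.r x (decide (z < (x : EReal)))
  | (k + 1), x, z =>
      P.r x (decide (z < (x : EReal))) +
        P.β * ∫ y, Bandit.Fk P k y z ∂(P.κ (decide (z < (x : EReal))) x)

/-- Finite-horizon resource metric `G_k(x,z)` (value iteration). -/
def Bandit.Gk (P : Bandit) : ℕ → ℝ → EReal → ℝ
  | 0, x, z => P.c x (decide (z < (x : EReal)))
  | (k + 1), x, z =>
      P.c x (decide (z < (x : EReal))) +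
        P.β * ∫ y, Bandit.Gk P k y z ∂(P.κ (decide (z < (x : EReal))) x)

/-- Finite-horizon marginal reward metric `f_k(x,z)`. -/
def Bandit.fk (P : Bandit) : ℕ → ℝ → EReal → ℝ
  | 0, x, _ => P.r x true - P.r x false
  | (k + 1), x, z =>
      (P.r x true - P.r x false) +
        P.β * ((∫ y, P.Fk k y z ∂(P.κ true x)) - ∫ y, P.Fk k y z ∂(P.κ false x))

/-- Finite-horizon marginal resource metric `g_k(x,z)`. -/
def Bandit.gk (P : Bandit) : ℕ → ℝ → EReal → ℝ
  | 0, x, _ => P.c x true - P.c x false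
  | (k + 1), x, z =>
      (P.c x true - P.c x false) +
        P.β * ((∫ y, P.Gk k y z ∂(P.κ true x)) - ∫ y, P.Gk k y z ∂(P.κ false x))

namespace Bandit

variable (P : Bandit)

/-- Finite-horizon MP metric `m_k(x,z)`. -/
def mk' (k : ℕ) (x : ℝ) (z : EReal) : ℝ := P.fk k x z / P.gk k x z

/-- Finite-horizon MP index `m*_k(x)`. -/
def mkStar (k : ℕ) (x : ℝ) : ℝ := P.mk' k x (x : EReal)

/-- `g̲(x,z) = inf_k g_k(x,z)`. -/
def gbar (x : ℝ) (z : EReal) : ℝ := ⨅ k : ℕ, P.gk k x z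

end Bandit

section AuxProof

namespace BL

open MeasureTheory ProbabilityTheory Filter Topology Set

variable (P : Bandit)

lemma hγ0 : 0 ≤ P.γ := le_trans P.hβ0 P.hβγ

lemma hγpos : 0 < 1 - P.γ := by linarith [P.hγ1]

lemma w_pos (x : ℝ) : 0 < P.w x := lt_of_lt_of_le one_pos (P.hw_one x)

lemma c_abs (x : ℝ) (a : Bool) : |P.c x a| ≤ P.M * P.w x := by
  rw [abs_of_nonneg]
  · exact P.hc_bd x a
  · cases a
    · exact P.hc0 x
    · exact le_of_lt (lt_of_le_of_lt (P.hc0 x) (P.hc01 x))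

lemma integrable_wb {μ : Measure ℝ} (hμ : Integrable P.w μ) {ψ : ℝ → ℝ}
    (hm : Measurable ψ) {C : ℝ} (hb : ∀ x, |ψ x| ≤ C * P.w x) : Integrable ψ μ :=
  Integrable.mono' (hμ.const_mul C) hm.aestronglyMeasurable
    (ae_of_all _ fun x => by simpa [Real.norm_eq_abs] using hb x)

lemma nonneg_of_wb {C : ℝ} {ψ : ℝ → ℝ} (hb : ∀ x, |ψ x| ≤ C * P.w x) : 0 ≤ C := by
  have h := hb 0
  nlinarith [abs_nonneg (ψ 0), w_pos P 0]

lemma meas_kint (a : Bool) {ψ : ℝ → ℝ} (hm : Measurable ψ) :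
    Measurable fun x => ∫ y, ψ y ∂(P.κ a) x := by
  haveI := P.hκ a
  have h2 : StronglyMeasurable (Function.uncurry fun (_ : ℝ) (y : ℝ) => ψ y) :=
    (hm.comp measurable_snd).stronglyMeasurable
  exact (MeasureTheory.StronglyMeasurable.integral_kernel_prod_right (κ := P.κ a) h2).measurable

lemma abs_integral_le_wb {μ : Measure ℝ} (hμ : Integrable P.w μ) {ψ : ℝ → ℝ}
    (hm : Measurable ψ) {C : ℝ} (hb : ∀ x, |ψ x| ≤ C * P.w x) :
    |∫ y, ψ y ∂μ| ≤ C * ∫ y, P.w y ∂μ := by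
  calc |∫ y, ψ y ∂μ| ≤ ∫ y, |ψ y| ∂μ := by
        simpa [Real.norm_eq_abs] using norm_integral_le_integral_norm ψ (μ := μ)
    _ ≤ ∫ y, C * P.w y ∂μ := by
        refine integral_mono (integrable_wb P hμ hm hb).abs (hμ.const_mul C) ?_
        intro y; exact hb y
    _ = C * ∫ y, P.w y ∂μ := integral_const_mul _ _

lemma sub_wb {Φ Ψ : ℝ → ℝ} {CΦ CΨ : ℝ} (hΦ : ∀ x, |Φ x| ≤ CΦ * P.w x)
    (hΨ : ∀ x, |Ψ x| ≤ CΨ * P.w x) : ∀ x, |Φ x - Ψ x| ≤ (CΦ + CΨ) * P.w x := by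
  intro x
  have h1 : |Φ x - Ψ x| ≤ |Φ x| + |Ψ x| := abs_sub _ _
  nlinarith [hΦ x, hΨ x]

lemma ind_wb {s : Set ℝ} {ψ : ℝ → ℝ} {C : ℝ} (hb : ∀ x, |ψ x| ≤ C * P.w x) (hC : 0 ≤ C) :
    ∀ x, |s.indicator ψ x| ≤ C * P.w x := by
  intro x
  by_cases hx : x ∈ s
  · rw [Set.indicator_of_mem hx]; exact hb x
  · rw [Set.indicator_of_notMem hx]
    simpa using mul_nonneg hC (w_pos P x).le

lemma ind_wb2 {s : Set ℝ} {ψ : ℝ → ℝ} {C : ℝ} (hb : ∀ x, |ψ x| ≤ C * P.w x) (hC : 0 ≤ C) :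
    ∀ x, |s.indicator ψ x| ≤ C * s.indicator P.w x := by
  intro x
  by_cases hx : x ∈ s
  · rw [Set.indicator_of_mem hx, Set.indicator_of_mem hx]; exact hb x
  · rw [Set.indicator_of_notMem hx, Set.indicator_of_notMem hx]; simp


lemma ind_w_wb (s : Set ℝ) : ∀ x, |s.indicator P.w x| ≤ 1 * P.w x := by
  intro x
  rw [one_mul, abs_of_nonneg (Set.indicator_nonneg (fun y' _ => (w_pos P y').le) x)]
  exact Set.indicator_le_self' (fun y' _ => (w_pos P y').le) x

lemma wb_fixed {Φ ρ : ℝ → ℝ} {A : ℝ → Bool} (hΦm : Measurable Φ)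
    (hb : ∃ C, ∀ x, |Φ x| ≤ C * P.w x) (hρ : ∀ x, |ρ x| ≤ P.M * P.w x)
    (heq : ∀ x, Φ x = ρ x + P.β * ∫ y, Φ y ∂(P.κ (A x)) x) :
    ∀ x, |Φ x| ≤ P.M / (1 - P.γ) * P.w x := by
  obtain ⟨C, hC⟩ := hb
  have hC0 : 0 ≤ C := nonneg_of_wb P hC
  have key : ∀ n, ∀ x, |Φ x| ≤ (P.M * ∑ t ∈ Finset.range n, P.γ ^ t + P.γ ^ n * C) * P.w x := by
    intro n
    induction n with
    | zero => intro x; simpa using hC x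
    | succ n ih =>
      intro x
      set A' : ℝ := P.M * ∑ t ∈ Finset.range n, P.γ ^ t + P.γ ^ n * C with hA'
      have hA'0 : 0 ≤ A' := by
        have h1 : (0:ℝ) ≤ ∑ t ∈ Finset.range n, P.γ ^ t :=
          Finset.sum_nonneg fun t _ => pow_nonneg (hγ0 P) t
        have h2 : (0:ℝ) ≤ P.γ ^ n := pow_nonneg (hγ0 P) n
        nlinarith [P.hM]
      have h1 : |Φ x| ≤ P.M * P.w x + P.β * |∫ y, Φ y ∂(P.κ (A x)) x| := by
        rw [heq x]
        calc |ρ x + P.β * ∫ y, Φ y ∂(P.κ (A x)) x|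
            ≤ |ρ x| + |P.β * ∫ y, Φ y ∂(P.κ (A x)) x| := abs_add_le _ _
          _ ≤ _ := by
              rw [abs_mul, abs_of_nonneg P.hβ0]
              exact add_le_add (hρ x) le_rfl
      have h2 : |∫ y, Φ y ∂(P.κ (A x)) x| ≤ A' * ∫ y, P.w y ∂(P.κ (A x)) x :=
        abs_integral_le_wb P (P.hw_int _ x) hΦm ih
      have h3 : P.β * ∫ y, P.w y ∂(P.κ (A x)) x ≤ P.γ * P.w x := P.hw_drift _ x
      have h4 : P.β * |∫ y, Φ y ∂(P.κ (A x)) x| ≤ A' * (P.γ * P.w x) := by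
        calc P.β * |∫ y, Φ y ∂(P.κ (A x)) x| ≤ P.β * (A' * ∫ y, P.w y ∂(P.κ (A x)) x) :=
              mul_le_mul_of_nonneg_left h2 P.hβ0
          _ = A' * (P.β * ∫ y, P.w y ∂(P.κ (A x)) x) := by ring
          _ ≤ A' * (P.γ * P.w x) := mul_le_mul_of_nonneg_left h3 hA'0
      have hsum : ∑ t ∈ Finset.range (n+1), P.γ ^ t = P.γ * ∑ t ∈ Finset.range n, P.γ ^ t + 1 :=
        geom_sum_succ
      have hfin : (P.M * ∑ t ∈ Finset.range (n+1), P.γ ^ t + P.γ ^ (n+1) * C) * P.w x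
          = P.M * P.w x + A' * (P.γ * P.w x) := by
        rw [hsum, hA']; ring
      rw [hfin]
      linarith
  intro x
  have hlim : Tendsto (fun n : ℕ => (P.M * ∑ t ∈ Finset.range n, P.γ ^ t + P.γ ^ n * C) * P.w x)
      atTop (𝓝 ((P.M * (1 - P.γ)⁻¹ + 0 * C) * P.w x)) := by
    apply Tendsto.mul_const
    apply Tendsto.add
    · exact (hasSum_geometric_of_lt_one (hγ0 P) P.hγ1).tendsto_sum_nat.const_mul P.M
    · exact (tendsto_pow_atTop_nhds_zero_of_lt_one (hγ0 P) P.hγ1).mul_const C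
  have hfin := ge_of_tendsto hlim (Eventually.of_forall fun n => key n x)
  calc |Φ x| ≤ (P.M * (1 - P.γ)⁻¹ + 0 * C) * P.w x := hfin
    _ = P.M / (1 - P.γ) * P.w x := by rw [div_eq_mul_inv]; ring

lemma marg_bd {Φ : ℝ → ℝ} (hΦ : ∀ x, |Φ x| ≤ P.M / (1 - P.γ) * P.w x) (hΦm : Measurable Φ)
    {ρt ρf : ℝ → ℝ} (ht : ∀ x, |ρt x| ≤ P.M * P.w x) (hf : ∀ x, |ρf x| ≤ P.M * P.w x) :
    ∀ x, |ρt x - ρf x + P.β * ((∫ y, Φ y ∂(P.κ true) x) - ∫ y, Φ y ∂(P.κ false) x)|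
      ≤ 2 * P.M / (1 - P.γ) * P.w x := by
  intro x
  have hk : ∀ a : Bool, P.β * |∫ y, Φ y ∂(P.κ a) x| ≤ P.M / (1 - P.γ) * (P.γ * P.w x) := by
    intro a
    have h1 : |∫ y, Φ y ∂(P.κ a) x| ≤ P.M / (1 - P.γ) * ∫ y, P.w y ∂(P.κ a) x :=
      abs_integral_le_wb P (P.hw_int a x) hΦm hΦ
    have hq : 0 ≤ P.M / (1 - P.γ) := div_nonneg P.hM.le (hγpos P).le
    calc P.β * |∫ y, Φ y ∂(P.κ a) x| ≤ P.β * (P.M / (1 - P.γ) * ∫ y, P.w y ∂(P.κ a) x) :=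
          mul_le_mul_of_nonneg_left h1 P.hβ0
      _ = P.M / (1 - P.γ) * (P.β * ∫ y, P.w y ∂(P.κ a) x) := by ring
      _ ≤ P.M / (1 - P.γ) * (P.γ * P.w x) := mul_le_mul_of_nonneg_left (P.hw_drift a x) hq
  have habs : |ρt x - ρf x + P.β * ((∫ y, Φ y ∂(P.κ true) x) - ∫ y, Φ y ∂(P.κ false) x)|
      ≤ |ρt x| + |ρf x| + (P.β * |∫ y, Φ y ∂(P.κ true) x| + P.β * |∫ y, Φ y ∂(P.κ false) x|) := by
    have h1 := abs_add_le (ρt x - ρf x)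
        (P.β * ((∫ y, Φ y ∂(P.κ true) x) - ∫ y, Φ y ∂(P.κ false) x))
    have h2 := abs_sub (ρt x) (ρf x)
    have h3 := abs_sub (∫ y, Φ y ∂(P.κ true) x) (∫ y, Φ y ∂(P.κ false) x)
    have h4 : |P.β * ((∫ y, Φ y ∂(P.κ true) x) - ∫ y, Φ y ∂(P.κ false) x)|
        = P.β * |(∫ y, Φ y ∂(P.κ true) x) - ∫ y, Φ y ∂(P.κ false) x| := by
      rw [abs_mul, abs_of_nonneg P.hβ0]
    nlinarith [mul_le_mul_of_nonneg_left h3 P.hβ0]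
  have hid : 2 * P.M / (1 - P.γ) * P.w x
      = P.M * P.w x + P.M * P.w x
        + (P.M / (1 - P.γ) * (P.γ * P.w x) + P.M / (1 - P.γ) * (P.γ * P.w x)) := by
    have h1γ : (1:ℝ) - P.γ ≠ 0 := ne_of_gt (hγpos P)
    field_simp
    ring
  rw [hid]
  linarith [hk true, hk false, ht x, hf x, habs]

lemma decomp {A B : ℝ → Bool} {Φ Ψ : ℝ → ℝ} {ρ : ℝ → Bool → ℝ}
    (hΦm : Measurable Φ) (hΨm : Measurable Ψ)
    {CΦ CΨ : ℝ} (hΦb : ∀ x, |Φ x| ≤ CΦ * P.w x) (hΨb : ∀ x, |Ψ x| ≤ CΨ * P.w x)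
    (hΦeq : ∀ x, Φ x = ρ x (A x) + P.β * ∫ y, Φ y ∂(P.κ (A x)) x)
    (hΨeq : ∀ x, Ψ x = ρ x (B x) + P.β * ∫ y, Ψ y ∂(P.κ (B x)) x) (x : ℝ) :
    Φ x - Ψ x = (if A x = B x then 0 else (if A x then 1 else -1) *
        (ρ x true - ρ x false + P.β * ((∫ y, Φ y ∂(P.κ true) x) - ∫ y, Φ y ∂(P.κ false) x)))
      + P.β * ∫ y, (Φ y - Ψ y) ∂(P.κ (B x)) x := by
  have hsub : ∀ a : Bool, ∫ y, (Φ y - Ψ y) ∂(P.κ a) x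
      = (∫ y, Φ y ∂(P.κ a) x) - ∫ y, Ψ y ∂(P.κ a) x := fun a =>
    integral_sub (integrable_wb P (P.hw_int a x) hΦm hΦb)
      (integrable_wb P (P.hw_int a x) hΨm hΨb)
  rw [hsub]
  cases hA : A x <;> cases hB : B x <;>
    rw [hΦeq x, hΨeq x, hA, hB] <;> norm_num <;> ring

lemma thrKer_app (z : EReal) (x : ℝ) :
    P.thrKer z x = P.κ (decide (z < (x : EReal))) x := by
  by_cases h : z < ((x : ℝ) : EReal)
  · rw [decide_eq_true h]; exact if_pos h
  · rw [decide_eq_false h]; exact if_neg h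

lemma thrKerM_app (z : EReal) (x : ℝ) :
    P.thrKerM z x = P.κ (decide (z ≤ (x : EReal))) x := by
  by_cases h : z ≤ ((x : ℝ) : EReal)
  · rw [decide_eq_true h]; exact if_pos h
  · rw [decide_eq_false h]; exact if_neg h

lemma thrKer_markov (z : EReal) : IsMarkovKernel (P.thrKer z) := by
  haveI := P.hκ true; haveI := P.hκ false
  unfold Bandit.thrKer; infer_instance

lemma thrKerM_markov (z : EReal) : IsMarkovKernel (P.thrKerM z) := by
  haveI := P.hκ true; haveI := P.hκ false
  unfold Bandit.thrKerM; infer_instance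

lemma thrKer_w (z : EReal) (x : ℝ) : Integrable P.w (P.thrKer z x) := by
  rw [thrKer_app]; exact P.hw_int _ x

lemma thrKerM_w (z : EReal) (x : ℝ) : Integrable P.w (P.thrKerM z x) := by
  rw [thrKerM_app]; exact P.hw_int _ x

lemma thrKer_drift (z : EReal) (x : ℝ) :
    P.β * ∫ y, P.w y ∂(P.thrKer z x) ≤ P.γ * P.w x := by
  rw [thrKer_app]; exact P.hw_drift _ x

lemma thrKerM_drift (z : EReal) (x : ℝ) :
    P.β * ∫ y, P.w y ∂(P.thrKerM z x) ≤ P.γ * P.w x := by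
  rw [thrKerM_app]; exact P.hw_drift _ x


lemma kerIter_succ (K : Kernel ℝ ℝ) (t : ℕ) (q : Measure ℝ) :
    kerIter K (t+1) q = (kerIter K t q).bind (fun x => K x) := rfl

lemma kerIter_prob (K : Kernel ℝ ℝ) [IsMarkovKernel K] {q : Measure ℝ}
    (hq : IsProbabilityMeasure q) : ∀ t, IsProbabilityMeasure (kerIter K t q) := by
  intro t
  induction t with
  | zero => exact hq
  | succ t ih =>
    haveI := ih
    constructor
    rw [kerIter_succ, Measure.bind_apply MeasurableSet.univ K.measurable.aemeasurable]
    simp [measure_univ]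

lemma kerIter_lint (K : Kernel ℝ ℝ) [IsMarkovKernel K] (hKw : ∀ x, Integrable P.w (K x))
    (hdrift : ∀ x, P.β * ∫ y, P.w y ∂K x ≤ P.γ * P.w x) (q : Measure ℝ) :
    ∀ t, ENNReal.ofReal (P.β ^ t) * ∫⁻ y, ENNReal.ofReal (P.w y) ∂(kerIter K t q)
      ≤ ENNReal.ofReal (P.γ ^ t) * ∫⁻ y, ENNReal.ofReal (P.w y) ∂q := by
  have hstep : ∀ x, ENNReal.ofReal P.β * ∫⁻ y, ENNReal.ofReal (P.w y) ∂K x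
      ≤ ENNReal.ofReal P.γ * ENNReal.ofReal (P.w x) := by
    intro x
    rw [← ofReal_integral_eq_lintegral_ofReal (hKw x) (ae_of_all _ fun y => (w_pos P y).le),
      ← ENNReal.ofReal_mul P.hβ0, ← ENNReal.ofReal_mul (hγ0 P)]
    exact ENNReal.ofReal_le_ofReal (hdrift x)
  intro t
  induction t with
  | zero => simp [kerIter]
  | succ t ih =>
    have hmw : Measurable fun y => ENNReal.ofReal (P.w y) := P.hw_meas.ennreal_ofReal
    rw [kerIter_succ, Measure.lintegral_bind K.measurable.aemeasurable hmw.aemeasurable]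
    have hmki : Measurable fun x => ∫⁻ y, ENNReal.ofReal (P.w y) ∂K x :=
      Measurable.lintegral_kernel (κ := K) hmw
    calc ENNReal.ofReal (P.β ^ (t+1)) * ∫⁻ x, (∫⁻ y, ENNReal.ofReal (P.w y) ∂K x) ∂(kerIter K t q)
        = ENNReal.ofReal (P.β ^ t)
          * ∫⁻ x, ENNReal.ofReal P.β * ∫⁻ y, ENNReal.ofReal (P.w y) ∂K x ∂(kerIter K t q) := by
          rw [lintegral_const_mul _ hmki, ← mul_assoc,
            ← ENNReal.ofReal_mul (pow_nonneg P.hβ0 t), ← pow_succ]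
      _ ≤ ENNReal.ofReal (P.β ^ t)
          * ∫⁻ x, ENNReal.ofReal P.γ * ENNReal.ofReal (P.w x) ∂(kerIter K t q) := by
          exact mul_le_mul_of_nonneg_left (lintegral_mono fun x => hstep x) (zero_le)
      _ = ENNReal.ofReal P.γ
          * (ENNReal.ofReal (P.β ^ t) * ∫⁻ x, ENNReal.ofReal (P.w x) ∂(kerIter K t q)) := by
          rw [lintegral_const_mul _ hmw]; ring
      _ ≤ ENNReal.ofReal P.γ
          * (ENNReal.ofReal (P.γ ^ t) * ∫⁻ y, ENNReal.ofReal (P.w y) ∂q) := by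
          exact mul_le_mul_of_nonneg_left ih (zero_le)
      _ = ENNReal.ofReal (P.γ ^ (t+1)) * ∫⁻ y, ENNReal.ofReal (P.w y) ∂q := by
          rw [← mul_assoc, ← ENNReal.ofReal_mul (hγ0 P), ← pow_succ']

lemma lint_of_integrable {μ : Measure ℝ} (hμ : Integrable P.w μ) :
    ∫⁻ y, ENNReal.ofReal (P.w y) ∂μ < ⊤ := by
  have h := hμ.hasFiniteIntegral
  rw [hasFiniteIntegral_iff_ofReal (ae_of_all _ fun y => (w_pos P y).le)] at h
  exact h

lemma integrable_of_lint {μ : Measure ℝ} (h : ∫⁻ y, ENNReal.ofReal (P.w y) ∂μ < ⊤) :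
    Integrable P.w μ := by
  refine ⟨P.hw_meas.aestronglyMeasurable, ?_⟩
  rw [hasFiniteIntegral_iff_ofReal (ae_of_all _ fun y => (w_pos P y).le)]
  exact h

lemma kerIter_w (K : Kernel ℝ ℝ) [IsMarkovKernel K] (hKw : ∀ x, Integrable P.w (K x))
    (hdrift : ∀ x, P.β * ∫ y, P.w y ∂K x ≤ P.γ * P.w x) {q : Measure ℝ}
    (hq : Integrable P.w q) (hβ : 0 < P.β) (t : ℕ) : Integrable P.w (kerIter K t q) := by
  apply integrable_of_lint
  have h := kerIter_lint P K hKw hdrift q t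
  have hne : ENNReal.ofReal (P.β ^ t) ≠ 0 := by
    simp only [ne_eq, ENNReal.ofReal_eq_zero, not_le]
    positivity
  by_contra htop
  push_neg at htop
  have h1 : ∫⁻ y, ENNReal.ofReal (P.w y) ∂(kerIter K t q) = ⊤ := top_le_iff.mp htop
  rw [h1, ENNReal.mul_top hne] at h
  have h2 : ENNReal.ofReal (P.γ ^ t) * ∫⁻ y, ENNReal.ofReal (P.w y) ∂q < ⊤ :=
    ENNReal.mul_lt_top ENNReal.ofReal_lt_top (lint_of_integrable P hq)
  exact h2.ne (top_le_iff.mp h)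

lemma kerIter_w_bd (K : Kernel ℝ ℝ) [IsMarkovKernel K] (hKw : ∀ x, Integrable P.w (K x))
    (hdrift : ∀ x, P.β * ∫ y, P.w y ∂K x ≤ P.γ * P.w x) {q : Measure ℝ}
    (hq : Integrable P.w q) (hβ : 0 < P.β) (t : ℕ) :
    P.β ^ t * ∫ y, P.w y ∂(kerIter K t q) ≤ P.γ ^ t * ∫ y, P.w y ∂q := by
  have h := kerIter_lint P K hKw hdrift q t
  rw [← ofReal_integral_eq_lintegral_ofReal (kerIter_w P K hKw hdrift hq hβ t)
      (ae_of_all _ fun y => (w_pos P y).le),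
    ← ofReal_integral_eq_lintegral_ofReal hq (ae_of_all _ fun y => (w_pos P y).le),
    ← ENNReal.ofReal_mul (pow_nonneg P.hβ0 t), ← ENNReal.ofReal_mul (pow_nonneg (hγ0 P) t)] at h
  exact (ENNReal.ofReal_le_ofReal_iff
    (mul_nonneg (pow_nonneg (hγ0 P) t) (integral_nonneg fun y => (w_pos P y).le))).mp h

lemma kerIter_facts (K : Kernel ℝ ℝ) [IsMarkovKernel K] (hKw : ∀ x, Integrable P.w (K x))
    (hdrift : ∀ x, P.β * ∫ y, P.w y ∂K x ≤ P.γ * P.w x) {q : Measure ℝ}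
    (hq : Integrable P.w q) (t : ℕ) (ht : P.β ^ t ≠ 0) :
    Integrable P.w (kerIter K t q)
      ∧ P.β ^ t * ∫ y, P.w y ∂(kerIter K t q) ≤ P.γ ^ t * ∫ y, P.w y ∂q := by
  rcases Nat.eq_zero_or_pos t with rfl | htpos
  · exact ⟨hq, by simp [kerIter]⟩
  · have hβ : 0 < P.β := by
      rcases eq_or_lt_of_le P.hβ0 with h0 | h0
      · exact absurd (by rw [← h0]; exact zero_pow htpos.ne') ht
      · exact h0
    exact ⟨kerIter_w P K hKw hdrift hq hβ t, kerIter_w_bd P K hKw hdrift hq hβ t⟩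

lemma integral_bind_wb (K : Kernel ℝ ℝ) [IsMarkovKernel K]
    (hKw : ∀ x, Integrable P.w (K x)) {c0 : ℝ}
    (hgrow : ∀ x, ∫ y, P.w y ∂K x ≤ c0 * P.w x)
    {μ : Measure ℝ} (hμ : Integrable P.w μ) (hμb : Integrable P.w (μ.bind (fun x => K x)))
    {ψ : ℝ → ℝ} (hm : Measurable ψ) {C : ℝ} (hb : ∀ x, |ψ x| ≤ C * P.w x) :
    ∫ y, ψ y ∂(μ.bind (fun x => K x)) = ∫ x, (∫ y, ψ y ∂K x) ∂μ := by
  have hC0 : 0 ≤ C := nonneg_of_wb P hb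
  have hc0 : 0 ≤ c0 := by
    have h1 : (0:ℝ) ≤ ∫ y, P.w y ∂K 0 := integral_nonneg fun y => (w_pos P y).le
    nlinarith [hgrow 0, w_pos P 0]
  have hφpm : Measurable fun y => ENNReal.ofReal (ψ y) := hm.ennreal_ofReal
  have hφnm : Measurable fun y => ENNReal.ofReal (-ψ y) := hm.neg.ennreal_ofReal
  have hub : ∀ x, (∫⁻ y, ENNReal.ofReal (ψ y) ∂K x) ≤ ENNReal.ofReal (C * (c0 * P.w x))
      ∧ (∫⁻ y, ENNReal.ofReal (-ψ y) ∂K x) ≤ ENNReal.ofReal (C * (c0 * P.w x)) := by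
    intro x
    have hbig : ∫⁻ y, ENNReal.ofReal (C * P.w y) ∂K x ≤ ENNReal.ofReal (C * (c0 * P.w x)) := by
      rw [← ofReal_integral_eq_lintegral_ofReal ((hKw x).const_mul C)
        (ae_of_all _ fun y => mul_nonneg hC0 (w_pos P y).le)]
      apply ENNReal.ofReal_le_ofReal
      rw [integral_const_mul]
      exact mul_le_mul_of_nonneg_left (hgrow x) hC0
    constructor
    · refine le_trans (lintegral_mono fun y => ENNReal.ofReal_le_ofReal ?_) hbig
      have := abs_le.mp (hb y); linarith [this.2]
    · refine le_trans (lintegral_mono fun y => ENNReal.ofReal_le_ofReal ?_) hbig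
      have := abs_le.mp (hb y); linarith [this.1]
  have hup : Measurable fun x => ∫⁻ y, ENNReal.ofReal (ψ y) ∂K x :=
    Measurable.lintegral_kernel (κ := K) hφpm
  have hvp : Measurable fun x => ∫⁻ y, ENNReal.ofReal (-ψ y) ∂K x :=
    Measurable.lintegral_kernel (κ := K) hφnm
  have h1 : ∫ x, (∫⁻ y, ENNReal.ofReal (ψ y) ∂K x).toReal ∂μ
      = (∫⁻ x, ∫⁻ y, ENNReal.ofReal (ψ y) ∂K x ∂μ).toReal :=
    integral_toReal hup.aemeasurable
      (ae_of_all _ fun x => lt_of_le_of_lt (hub x).1 ENNReal.ofReal_lt_top)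
  have h2 : ∫ x, (∫⁻ y, ENNReal.ofReal (-ψ y) ∂K x).toReal ∂μ
      = (∫⁻ x, ∫⁻ y, ENNReal.ofReal (-ψ y) ∂K x ∂μ).toReal :=
    integral_toReal hvp.aemeasurable
      (ae_of_all _ fun x => lt_of_le_of_lt (hub x).2 ENNReal.ofReal_lt_top)
  have hbd : ∀ (u : ℝ → ENNReal), (∀ x, u x ≤ ENNReal.ofReal (C * (c0 * P.w x))) →
      ∀ x, |(u x).toReal| ≤ (C * c0) * P.w x := by
    intro u hu x
    rw [abs_of_nonneg ENNReal.toReal_nonneg]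
    calc (u x).toReal ≤ (ENNReal.ofReal (C * (c0 * P.w x))).toReal :=
          ENNReal.toReal_mono ENNReal.ofReal_ne_top (hu x)
      _ = C * (c0 * P.w x) := ENNReal.toReal_ofReal
          (mul_nonneg hC0 (mul_nonneg hc0 (w_pos P x).le))
      _ = (C * c0) * P.w x := by ring
  have hInt1 : Integrable (fun x => (∫⁻ y, ENNReal.ofReal (ψ y) ∂K x).toReal) μ :=
    integrable_wb P hμ hup.ennreal_toReal (hbd _ fun x => (hub x).1)
  have hInt2 : Integrable (fun x => (∫⁻ y, ENNReal.ofReal (-ψ y) ∂K x).toReal) μ :=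
    integrable_wb P hμ hvp.ennreal_toReal (hbd _ fun x => (hub x).2)
  calc ∫ y, ψ y ∂(μ.bind (fun x => K x))
      = (∫⁻ y, ENNReal.ofReal (ψ y) ∂(μ.bind (fun x => K x))).toReal
        - (∫⁻ y, ENNReal.ofReal (-ψ y) ∂(μ.bind (fun x => K x))).toReal :=
        integral_eq_lintegral_pos_part_sub_lintegral_neg_part (integrable_wb P hμb hm hb)
    _ = (∫⁻ x, ∫⁻ y, ENNReal.ofReal (ψ y) ∂K x ∂μ).toReal
        - (∫⁻ x, ∫⁻ y, ENNReal.ofReal (-ψ y) ∂K x ∂μ).toReal := by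
        rw [Measure.lintegral_bind K.measurable.aemeasurable hφpm.aemeasurable,
          Measure.lintegral_bind K.measurable.aemeasurable hφnm.aemeasurable]
    _ = ∫ x, (∫⁻ y, ENNReal.ofReal (ψ y) ∂K x).toReal ∂μ
        - ∫ x, (∫⁻ y, ENNReal.ofReal (-ψ y) ∂K x).toReal ∂μ := by rw [h1, h2]
    _ = ∫ x, ((∫⁻ y, ENNReal.ofReal (ψ y) ∂K x).toReal
        - (∫⁻ y, ENNReal.ofReal (-ψ y) ∂K x).toReal) ∂μ := (integral_sub hInt1 hInt2).symm
    _ = ∫ x, (∫ y, ψ y ∂K x) ∂μ := by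
        refine integral_congr_ae (ae_of_all _ fun x => ?_)
        exact (integral_eq_lintegral_pos_part_sub_lintegral_neg_part
          (integrable_wb P (hKw x) hm hb)).symm


lemma ML_main (K : Kernel ℝ ℝ) [IsMarkovKernel K] (hKw : ∀ x, Integrable P.w (K x))
    (hdrift : ∀ x, P.β * ∫ y, P.w y ∂K x ≤ P.γ * P.w x)
    {D h : ℝ → ℝ} (hDm : Measurable D) (hhm : Measurable h)
    {C₁ C₂ : ℝ} (hD : ∀ x, |D x| ≤ C₁ * P.w x) (hh : ∀ x, |h x| ≤ C₂ * P.w x)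
    (heq : ∀ x, D x = h x + P.β * ∫ y, D y ∂K x)
    {q : Measure ℝ} (hqP : IsProbabilityMeasure q) (hq : Integrable P.w q) :
    ∫ y, D y ∂q = ∑' t : ℕ, P.β ^ t * ∫ y, h y ∂(kerIter K t q) := by
  rcases eq_or_lt_of_le P.hβ0 with hβ0 | hβ
  · have hDh : ∀ x, D x = h x := fun x => by rw [heq x, ← hβ0]; ring
    rw [tsum_eq_single 0 (fun t ht => by rw [← hβ0, zero_pow ht, zero_mul])]
    simp only [pow_zero, one_mul]
    exact integral_congr_ae (ae_of_all _ hDh)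
  · haveI := hqP
    have hC₁ : 0 ≤ C₁ := nonneg_of_wb P hD
    have hC₂ : 0 ≤ C₂ := nonneg_of_wb P hh
    have hwq0 : 0 ≤ ∫ y, P.w y ∂q := integral_nonneg fun y => (w_pos P y).le
    have hμw : ∀ t, Integrable P.w (kerIter K t q) := kerIter_w P K hKw hdrift hq hβ
    have hgrow : ∀ x, ∫ y, P.w y ∂K x ≤ (P.γ / P.β) * P.w x := by
      intro x
      rw [div_mul_eq_mul_div, le_div_iff₀ hβ]
      nlinarith [hdrift x]
    have step1 : ∀ t, ∫ y, D y ∂(kerIter K (t+1) q) = ∫ x, (∫ y, D y ∂K x) ∂(kerIter K t q) := by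
      intro t
      rw [kerIter_succ]
      exact integral_bind_wb P K hKw hgrow (hμw t) (by rw [← kerIter_succ]; exact hμw (t+1))
        hDm hD
    have hξm : Measurable fun x => ∫ y, D y ∂K x := by
      haveI : IsSFiniteKernel K := inferInstance
      have h2 : StronglyMeasurable (Function.uncurry fun (_ : ℝ) (y : ℝ) => D y) :=
        (hDm.comp measurable_snd).stronglyMeasurable
      exact (MeasureTheory.StronglyMeasurable.integral_kernel_prod_right (κ := K) h2).measurable
    have hξb : ∀ x, |∫ y, D y ∂K x| ≤ (C₁ * (P.γ / P.β)) * P.w x := by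
      intro x
      calc |∫ y, D y ∂K x| ≤ C₁ * ∫ y, P.w y ∂K x := abs_integral_le_wb P (hKw x) hDm hD
        _ ≤ C₁ * ((P.γ / P.β) * P.w x) := mul_le_mul_of_nonneg_left (hgrow x) hC₁
        _ = (C₁ * (P.γ / P.β)) * P.w x := by ring
    have step2 : ∀ t, ∫ y, D y ∂(kerIter K t q)
        = (∫ y, h y ∂(kerIter K t q)) + P.β * ∫ x, (∫ y, D y ∂K x) ∂(kerIter K t q) := by
      intro t
      have e : ∫ y, D y ∂(kerIter K t q)
          = ∫ y, (h y + P.β * ∫ z, D z ∂K y) ∂(kerIter K t q) :=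
        integral_congr_ae (ae_of_all _ heq)
      rw [e, integral_add (integrable_wb P (hμw t) hhm hh)
        (((integrable_wb P (hμw t) hξm hξb)).const_mul P.β), integral_const_mul]
    have key : ∀ T, ∫ y, D y ∂q = (∑ t ∈ Finset.range T, P.β ^ t * ∫ y, h y ∂(kerIter K t q))
        + P.β ^ T * ∫ y, D y ∂(kerIter K T q) := by
      intro T
      induction T with
      | zero => simp [kerIter]
      | succ T ih =>
        rw [ih, Finset.sum_range_succ]
        have e : P.β ^ T * ∫ y, D y ∂(kerIter K T q)
            = P.β ^ T * ∫ y, h y ∂(kerIter K T q)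
              + P.β ^ (T+1) * ∫ y, D y ∂(kerIter K (T+1) q) := by
          rw [step2 T, step1 T, pow_succ]; ring
        rw [e]; ring
    have tail : Tendsto (fun T => P.β ^ T * ∫ y, D y ∂(kerIter K T q)) atTop (𝓝 0) := by
      have hbndT : ∀ T, ‖P.β ^ T * ∫ y, D y ∂(kerIter K T q)‖
          ≤ C₁ * (∫ y, P.w y ∂q) * P.γ ^ T := by
        intro T
        rw [Real.norm_eq_abs, abs_mul, abs_pow, abs_of_nonneg P.hβ0]
        calc P.β ^ T * |∫ y, D y ∂(kerIter K T q)|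
            ≤ P.β ^ T * (C₁ * ∫ y, P.w y ∂(kerIter K T q)) :=
              mul_le_mul_of_nonneg_left (abs_integral_le_wb P (hμw T) hDm hD)
                (pow_nonneg P.hβ0 T)
          _ = C₁ * (P.β ^ T * ∫ y, P.w y ∂(kerIter K T q)) := by ring
          _ ≤ C₁ * (P.γ ^ T * ∫ y, P.w y ∂q) :=
              mul_le_mul_of_nonneg_left (kerIter_w_bd P K hKw hdrift hq hβ T) hC₁
          _ = C₁ * (∫ y, P.w y ∂q) * P.γ ^ T := by ring
      exact squeeze_zero_norm hbndT (by
        simpa using (tendsto_pow_atTop_nhds_zero_of_lt_one (hγ0 P) P.hγ1).const_mul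
          (C₁ * ∫ y, P.w y ∂q))
    have hgeo : Summable (fun t : ℕ => C₂ * (∫ y, P.w y ∂q) * P.γ ^ t) :=
      (summable_geometric_of_lt_one (hγ0 P) P.hγ1).mul_left (C₂ * ∫ y, P.w y ∂q)
    have hsumm : Summable (fun t => P.β ^ t * ∫ y, h y ∂(kerIter K t q)) := by
      apply Summable.of_norm_bounded hgeo
      intro t
      rw [Real.norm_eq_abs, abs_mul, abs_pow, abs_of_nonneg P.hβ0]
      calc P.β ^ t * |∫ y, h y ∂(kerIter K t q)|
          ≤ P.β ^ t * (C₂ * ∫ y, P.w y ∂(kerIter K t q)) :=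
            mul_le_mul_of_nonneg_left (abs_integral_le_wb P (hμw t) hhm hh) (pow_nonneg P.hβ0 t)
        _ = C₂ * (P.β ^ t * ∫ y, P.w y ∂(kerIter K t q)) := by ring
        _ ≤ C₂ * (P.γ ^ t * ∫ y, P.w y ∂q) :=
            mul_le_mul_of_nonneg_left (kerIter_w_bd P K hKw hdrift hq hβ t) hC₂
        _ = C₂ * (∫ y, P.w y ∂q) * P.γ ^ t := by ring
    have hps : Tendsto (fun T => ∑ t ∈ Finset.range T, P.β ^ t * ∫ y, h y ∂(kerIter K t q))
        atTop (𝓝 (∫ y, D y ∂q)) := by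
      have e : (fun T => ∑ t ∈ Finset.range T, P.β ^ t * ∫ y, h y ∂(kerIter K t q))
          = fun T => ∫ y, D y ∂q - P.β ^ T * ∫ y, D y ∂(kerIter K T q) := by
        funext T; linarith [key T]
      rw [e]
      simpa using tendsto_const_nhds.sub tail
    exact tendsto_nhds_unique hps hsumm.hasSum.tendsto_sum_nat

lemma ML_bound (K : Kernel ℝ ℝ) [IsMarkovKernel K] (hKw : ∀ x, Integrable P.w (K x))
    (hdrift : ∀ x, P.β * ∫ y, P.w y ∂K x ≤ P.γ * P.w x)
    {D h : ℝ → ℝ} (hDm : Measurable D) (hhm : Measurable h)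
    {C₁ : ℝ} (hD : ∀ x, |D x| ≤ C₁ * P.w x) {s : Set ℝ} (hs : MeasurableSet s)
    (hh : ∀ x, |h x| ≤ (2 * P.M / (1 - P.γ)) * s.indicator P.w x)
    (heq : ∀ x, D x = h x + P.β * ∫ y, D y ∂K x)
    {q : Measure ℝ} (hqP : IsProbabilityMeasure q) (hq : Integrable P.w q) :
    |∫ y, D y ∂q| ≤ (2 * P.M / (1 - P.γ))
      * ∑' t : ℕ, P.β ^ t * ∫ y, s.indicator P.w y ∂(kerIter K t q) := by
  haveI := hqP
  set c := 2 * P.M / (1 - P.γ) with hc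
  have hcpos : 0 < c := div_pos (by linarith [P.hM]) (hγpos P)
  have hindw : ∀ x, s.indicator P.w x ≤ P.w x :=
    fun x => Set.indicator_le_self' (fun y _ => (w_pos P y).le) x
  have hh' : ∀ x, |h x| ≤ c * P.w x := fun x =>
    le_trans (hh x) (mul_le_mul_of_nonneg_left (hindw x) hcpos.le)
  have hwq0 : 0 ≤ ∫ y, P.w y ∂q := integral_nonneg fun y => (w_pos P y).le
  have hμw : ∀ t : ℕ, P.β ^ t ≠ 0 → Integrable P.w (kerIter K t q) :=
    fun t ht => (kerIter_facts P K hKw hdrift hq t ht).1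
  have hindm : Measurable (s.indicator P.w) := P.hw_meas.indicator hs
  have hindnn : ∀ μ' : Measure ℝ, 0 ≤ ∫ y, s.indicator P.w y ∂μ' := fun μ' =>
    integral_nonneg fun y => Set.indicator_nonneg (fun y' _ => (w_pos P y').le) y
  have hbt : ∀ t : ℕ, |P.β ^ t * ∫ y, h y ∂(kerIter K t q)|
      ≤ c * (P.β ^ t * ∫ y, s.indicator P.w y ∂(kerIter K t q)) := by
    intro t
    by_cases hβt : P.β ^ t = 0
    · simp [hβt]
    · have hw := hμw t hβt
      rw [abs_mul, abs_pow, abs_of_nonneg P.hβ0]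
      have h1 : |∫ y, h y ∂(kerIter K t q)| ≤ c * ∫ y, s.indicator P.w y ∂(kerIter K t q) := by
        calc |∫ y, h y ∂(kerIter K t q)| ≤ ∫ y, |h y| ∂(kerIter K t q) := by
              simpa [Real.norm_eq_abs] using norm_integral_le_integral_norm h (μ := kerIter K t q)
          _ ≤ ∫ y, c * s.indicator P.w y ∂(kerIter K t q) := by
              refine integral_mono (integrable_wb P hw hhm hh').abs
                ((integrable_wb P hw hindm (ind_w_wb P s)).const_mul c) ?_
              intro y; exact hh y
          _ = c * ∫ y, s.indicator P.w y ∂(kerIter K t q) := integral_const_mul _ _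
      calc P.β ^ t * |∫ y, h y ∂(kerIter K t q)|
          ≤ P.β ^ t * (c * ∫ y, s.indicator P.w y ∂(kerIter K t q)) :=
            mul_le_mul_of_nonneg_left h1 (pow_nonneg P.hβ0 t)
        _ = c * (P.β ^ t * ∫ y, s.indicator P.w y ∂(kerIter K t q)) := by ring
  have hgsum : Summable (fun t : ℕ => c * ((∫ y, P.w y ∂q) * P.γ ^ t)) :=
    ((summable_geometric_of_lt_one (hγ0 P) P.hγ1).mul_left _).mul_left c
  have hble : ∀ t : ℕ, c * (P.β ^ t * ∫ y, s.indicator P.w y ∂(kerIter K t q))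
      ≤ c * ((∫ y, P.w y ∂q) * P.γ ^ t) := by
    intro t
    by_cases hβt : P.β ^ t = 0
    · simp only [hβt, zero_mul, mul_zero]
      exact mul_nonneg hcpos.le (mul_nonneg hwq0 (pow_nonneg (hγ0 P) t))
    · have hw := hμw t hβt
      apply mul_le_mul_of_nonneg_left _ hcpos.le
      calc P.β ^ t * ∫ y, s.indicator P.w y ∂(kerIter K t q)
          ≤ P.β ^ t * ∫ y, P.w y ∂(kerIter K t q) := by
            apply mul_le_mul_of_nonneg_left _ (pow_nonneg P.hβ0 t)
            refine integral_mono (integrable_wb P hw hindm (ind_w_wb P s)) hw ?_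
            intro y; exact hindw y
        _ ≤ P.γ ^ t * ∫ y, P.w y ∂q := (kerIter_facts P K hKw hdrift hq t hβt).2
        _ = (∫ y, P.w y ∂q) * P.γ ^ t := by ring
  have hbsum : Summable (fun t : ℕ => c * (P.β ^ t * ∫ y, s.indicator P.w y ∂(kerIter K t q))) :=
    Summable.of_nonneg_of_le
      (fun t => mul_nonneg hcpos.le (mul_nonneg (pow_nonneg P.hβ0 t) (hindnn _))) hble hgsum
  have habs : Summable (fun t : ℕ => |P.β ^ t * ∫ y, h y ∂(kerIter K t q)|) :=
    Summable.of_nonneg_of_le (fun t => abs_nonneg _) hbt hbsum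
  rw [ML_main P K hKw hdrift hDm hhm hD hh' heq hqP hq]
  have habs' : Summable (fun t : ℕ => ‖P.β ^ t * ∫ y, h y ∂(kerIter K t q)‖) := by
    simpa only [Real.norm_eq_abs] using habs
  calc |∑' t : ℕ, P.β ^ t * ∫ y, h y ∂(kerIter K t q)|
      ≤ ∑' t : ℕ, |P.β ^ t * ∫ y, h y ∂(kerIter K t q)| := by
        simpa only [Real.norm_eq_abs] using norm_tsum_le_tsum_norm habs' 
    _ ≤ ∑' t : ℕ, c * (P.β ^ t * ∫ y, s.indicator P.w y ∂(kerIter K t q)) :=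
        Summable.tsum_le_tsum hbt habs hbsum
    _ = c * ∑' t : ℕ, P.β ^ t * ∫ y, s.indicator P.w y ∂(kerIter K t q) := tsum_mul_left

lemma ML_tend (K : Kernel ℝ ℝ) [IsMarkovKernel K] (hKw : ∀ x, Integrable P.w (K x))
    (hdrift : ∀ x, P.β * ∫ y, P.w y ∂K x ≤ P.γ * P.w x)
    {q : Measure ℝ} (hqP : IsProbabilityMeasure q) (hq : Integrable P.w q)
    (s : ℕ → Set ℝ) (hs : ∀ n, MeasurableSet (s n)) (hlim : ∀ y, ∀ᶠ n in atTop, y ∉ s n) :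
    Tendsto (fun n => ∑' t : ℕ, P.β ^ t * ∫ y, (s n).indicator P.w y ∂(kerIter K t q))
      atTop (𝓝 0) := by
  haveI := hqP
  have hμw : ∀ t : ℕ, P.β ^ t ≠ 0 → Integrable P.w (kerIter K t q) :=
    fun t ht => (kerIter_facts P K hKw hdrift hq t ht).1
  have hwq0 : 0 ≤ ∫ y, P.w y ∂q := integral_nonneg fun y => (w_pos P y).le
  have h0 : Tendsto (fun n => ∑' t : ℕ, P.β ^ t * ∫ y, (s n).indicator P.w y ∂(kerIter K t q))
      atTop (𝓝 (∑' t : ℕ, (0:ℝ))) := by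
    apply tendsto_tsum_of_dominated_convergence
      (bound := fun t : ℕ => (∫ y, P.w y ∂q) * P.γ ^ t)
    · exact (summable_geometric_of_lt_one (hγ0 P) P.hγ1).mul_left _
    · intro t
      by_cases hβt : P.β ^ t = 0
      · simpa [hβt] using tendsto_const_nhds
      · have hw := hμw t hβt
        have hI : Tendsto (fun n => ∫ y, (s n).indicator P.w y ∂(kerIter K t q))
            atTop (𝓝 0) := by
          have h00 : (0:ℝ) = ∫ y, (0:ℝ) ∂(kerIter K t q) := by simp
          rw [h00]
          apply tendsto_integral_of_dominated_convergence P.w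
          · exact fun n => (P.hw_meas.indicator (hs n)).aestronglyMeasurable
          · exact hw
          · intro n
            refine ae_of_all _ fun y => ?_
            rw [Real.norm_eq_abs,
              abs_of_nonneg (Set.indicator_nonneg (fun y' _ => (w_pos P y').le) y)]
            exact Set.indicator_le_self' (fun y' _ => (w_pos P y').le) y
          · refine ae_of_all _ fun y => ?_
            apply Tendsto.congr' _ tendsto_const_nhds
            filter_upwards [hlim y] with n hn
            exact (Set.indicator_of_notMem hn _).symm
        simpa using hI.const_mul (P.β ^ t)
    · refine Filter.Eventually.of_forall fun n t => ?_
      by_cases hβt : P.β ^ t = 0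
      · simp only [hβt, zero_mul, norm_zero]
        exact mul_nonneg hwq0 (pow_nonneg (hγ0 P) t)
      · have hw := hμw t hβt
        have hindm : Measurable ((s n).indicator P.w) := P.hw_meas.indicator (hs n)
        rw [Real.norm_eq_abs, abs_mul, abs_pow, abs_of_nonneg P.hβ0,
          abs_of_nonneg (integral_nonneg fun y =>
            Set.indicator_nonneg (fun y' _ => (w_pos P y').le) y)]
        calc P.β ^ t * ∫ y, (s n).indicator P.w y ∂(kerIter K t q)
            ≤ P.β ^ t * ∫ y, P.w y ∂(kerIter K t q) := by
              apply mul_le_mul_of_nonneg_left _ (pow_nonneg P.hβ0 t)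
              refine integral_mono (integrable_wb P hw hindm (ind_w_wb P (s n))) hw ?_
              intro y; exact Set.indicator_le_self' (fun y' _ => (w_pos P y').le) y
          _ ≤ P.γ ^ t * ∫ y, P.w y ∂q := (kerIter_facts P K hKw hdrift hq t hβt).2
          _ = (∫ y, P.w y ∂q) * P.γ ^ t := by ring
  simpa using h0

lemma ML_pos (K : Kernel ℝ ℝ) (hKw : ∀ x, Integrable P.w (K x))
    (hdrift : ∀ x, P.β * ∫ y, P.w y ∂K x ≤ P.γ * P.w x)
    {D h : ℝ → ℝ} (hDm : Measurable D) {C₁ : ℝ} (hD : ∀ x, |D x| ≤ C₁ * P.w x)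
    (hh : ∀ x, 0 ≤ h x) (heq : ∀ x, D x = h x + P.β * ∫ y, D y ∂K x) :
    ∀ x, h x ≤ D x ∧ 0 ≤ D x := by
  have hC₁ : 0 ≤ C₁ := nonneg_of_wb P hD
  have key : ∀ n : ℕ, ∀ x, -(C₁ * P.γ ^ n * P.w x) ≤ D x := by
    intro n
    induction n with
    | zero =>
      intro x
      have := (abs_le.mp (hD x)).1
      simpa using this
    | succ n ih =>
      intro x
      have hint : ∫ y, -(C₁ * P.γ ^ n * P.w y) ∂K x ≤ ∫ y, D y ∂K x := by
        refine integral_mono (((hKw x).const_mul (C₁ * P.γ ^ n)).neg)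
          (integrable_wb P (hKw x) hDm hD) ?_
        intro y; exact ih y
      have e1 : ∫ y, -(C₁ * P.γ ^ n * P.w y) ∂K x = -(C₁ * P.γ ^ n * ∫ y, P.w y ∂K x) := by
        rw [integral_neg, integral_const_mul]
      rw [e1] at hint
      have h2 : -(C₁ * P.γ ^ n * (P.β * ∫ y, P.w y ∂K x)) ≤ P.β * ∫ y, D y ∂K x := by
        nlinarith [mul_le_mul_of_nonneg_left hint P.hβ0]
      have h3 : -(C₁ * P.γ ^ n * (P.γ * P.w x)) ≤ -(C₁ * P.γ ^ n * (P.β * ∫ y, P.w y ∂K x)) := by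
        have hcg : 0 ≤ C₁ * P.γ ^ n := mul_nonneg hC₁ (pow_nonneg (hγ0 P) n)
        nlinarith [mul_le_mul_of_nonneg_left (hdrift x) hcg]
      have h4 := heq x
      have h5 := hh x
      have e2 : C₁ * P.γ ^ (n+1) * P.w x = C₁ * P.γ ^ n * (P.γ * P.w x) := by ring
      rw [e2]
      linarith
  have hD0 : ∀ x, 0 ≤ D x := by
    intro x
    have hlim : Tendsto (fun n : ℕ => -(C₁ * P.γ ^ n * P.w x)) atTop (𝓝 (-(C₁ * 0 * P.w x))) := by
      apply Tendsto.neg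
      apply Tendsto.mul_const
      exact (tendsto_pow_atTop_nhds_zero_of_lt_one (hγ0 P) P.hγ1).const_mul C₁
    have := le_of_tendsto hlim (Eventually.of_forall fun n => key n x)
    simpa using this
  intro x
  refine ⟨?_, hD0 x⟩
  have hint : 0 ≤ ∫ y, D y ∂K x := integral_nonneg hD0
  nlinarith [heq x, mul_nonneg P.hβ0 hint]

lemma ML_zero (K : Kernel ℝ ℝ) (hKw : ∀ x, Integrable P.w (K x))
    (hdrift : ∀ x, P.β * ∫ y, P.w y ∂K x ≤ P.γ * P.w x)
    {D : ℝ → ℝ} (hDm : Measurable D) {C₁ : ℝ} (hD : ∀ x, |D x| ≤ C₁ * P.w x)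
    (heq : ∀ x, D x = P.β * ∫ y, D y ∂K x) : ∀ x, D x = 0 := by
  have hC₁ : 0 ≤ C₁ := nonneg_of_wb P hD
  have key : ∀ n : ℕ, ∀ x, |D x| ≤ C₁ * P.γ ^ n * P.w x := by
    intro n
    induction n with
    | zero => intro x; simpa using hD x
    | succ n ih =>
      intro x
      have h1 : |∫ y, D y ∂K x| ≤ (C₁ * P.γ ^ n) * ∫ y, P.w y ∂K x :=
        abs_integral_le_wb P (hKw x) hDm ih
      have hcg : 0 ≤ C₁ * P.γ ^ n := mul_nonneg hC₁ (pow_nonneg (hγ0 P) n)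
      have h2 : |D x| ≤ P.β * ((C₁ * P.γ ^ n) * ∫ y, P.w y ∂K x) := by
        rw [heq x, abs_mul, abs_of_nonneg P.hβ0]
        exact mul_le_mul_of_nonneg_left h1 P.hβ0
      have h3 := mul_le_mul_of_nonneg_left (hdrift x) hcg
      have e : C₁ * P.γ ^ (n+1) * P.w x = C₁ * P.γ ^ n * (P.γ * P.w x) := by ring
      rw [e]
      nlinarith
  intro x
  have hlim : Tendsto (fun n : ℕ => C₁ * P.γ ^ n * P.w x) atTop (𝓝 (C₁ * 0 * P.w x)) := by
    apply Tendsto.mul_const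
    exact (tendsto_pow_atTop_nhds_zero_of_lt_one (hγ0 P) P.hγ1).const_mul C₁
  have h1 := ge_of_tendsto hlim (Eventually.of_forall fun n => key n x)
  simp only [mul_zero, zero_mul] at h1
  exact abs_eq_zero.mp (le_antisymm h1 (abs_nonneg _))


lemma bF (z : EReal) : ∀ x, |P.F x z| ≤ P.M / (1 - P.γ) * P.w x :=
  wb_fixed P (P.hF_meas z) (P.hF_bdd z) (fun x => P.hr_bd x _) (fun x => P.hF_eq x z)

lemma bG (z : EReal) : ∀ x, |P.G x z| ≤ P.M / (1 - P.γ) * P.w x :=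
  wb_fixed P (P.hG_meas z) (P.hG_bdd z) (fun x => c_abs P x _) (fun x => P.hG_eq x z)

lemma bFm (z : EReal) : ∀ x, |P.Fm x z| ≤ P.M / (1 - P.γ) * P.w x :=
  wb_fixed P (P.hFm_meas z) (P.hFm_bdd z) (fun x => P.hr_bd x _) (fun x => P.hFm_eq x z)

lemma bGm (z : EReal) : ∀ x, |P.Gm x z| ≤ P.M / (1 - P.γ) * P.w x :=
  wb_fixed P (P.hGm_meas z) (P.hGm_bdd z) (fun x => c_abs P x _) (fun x => P.hGm_eq x z)

lemma bf (z : EReal) : ∀ x, |P.f x z| ≤ 2 * P.M / (1 - P.γ) * P.w x :=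
  marg_bd P (bF P z) (P.hF_meas z) (fun x => P.hr_bd x true) (fun x => P.hr_bd x false)

lemma bg (z : EReal) : ∀ x, |P.g x z| ≤ 2 * P.M / (1 - P.γ) * P.w x :=
  marg_bd P (bG P z) (P.hG_meas z) (fun x => c_abs P x true) (fun x => c_abs P x false)

lemma mf (z : EReal) : Measurable fun x => P.f x z := by
  unfold Bandit.f
  exact (((P.hr_cont true).measurable.sub (P.hr_cont false).measurable).add
    (((meas_kint P true (P.hF_meas z)).sub (meas_kint P false (P.hF_meas z))).const_mul P.β))

lemma mg (z : EReal) : Measurable fun x => P.g x z := by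
  unfold Bandit.g
  exact (((P.hc_cont true).measurable.sub (P.hc_cont false).measurable).add
    (((meas_kint P true (P.hG_meas z)).sub (meas_kint P false (P.hG_meas z))).const_mul P.β))

lemma decompF {z₁ z₂ : ℝ} (h12 : z₁ ≤ z₂) (x : ℝ) :
    P.F x ↑z₁ - P.F x ↑z₂ = (Set.Ioc z₁ z₂).indicator (fun y => P.f y ↑z₁) x
      + P.β * ∫ y, (P.F y ↑z₁ - P.F y ↑z₂) ∂(P.thrKer ↑z₂ x) := by
  have hd := decomp P (A := fun x => decide ((z₁ : EReal) < (x : EReal)))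
      (B := fun x => decide ((z₂ : EReal) < (x : EReal)))
      (Φ := fun y => P.F y ↑z₁) (Ψ := fun y => P.F y ↑z₂) (ρ := P.r)
      (P.hF_meas _) (P.hF_meas _) (bF P _) (bF P _)
      (fun x => P.hF_eq x ↑z₁) (fun x => P.hF_eq x ↑z₂) x
  rw [thrKer_app, hd]
  congr 1
  by_cases h1 : (z₁ : EReal) < (x : EReal) <;> by_cases h2 : (z₂ : EReal) < (x : EReal)
  · rw [decide_eq_true h1, decide_eq_true h2, if_pos rfl,
      Set.indicator_of_notMem (fun hmem => absurd (EReal.coe_lt_coe_iff.mp h2)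
        (not_lt.mpr hmem.2))]
  · rw [decide_eq_true h1, decide_eq_false h2, if_neg (by simp),
      Set.indicator_of_mem (show x ∈ Set.Ioc z₁ z₂ from ⟨EReal.coe_lt_coe_iff.mp h1,
        le_of_not_gt (fun hc => h2 (EReal.coe_lt_coe_iff.mpr hc))⟩)]
    simp only [if_pos]
    rw [one_mul]
    rfl
  · exact absurd (lt_of_le_of_lt (EReal.coe_le_coe_iff.mpr h12) h2) h1
  · rw [decide_eq_false h1, decide_eq_false h2, if_pos rfl,
      Set.indicator_of_notMem (fun hmem => h1 (EReal.coe_lt_coe_iff.mpr hmem.1))]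

lemma decompG {z₁ z₂ : ℝ} (h12 : z₁ ≤ z₂) (x : ℝ) :
    P.G x ↑z₁ - P.G x ↑z₂ = (Set.Ioc z₁ z₂).indicator (fun y => P.g y ↑z₁) x
      + P.β * ∫ y, (P.G y ↑z₁ - P.G y ↑z₂) ∂(P.thrKer ↑z₂ x) := by
  have hd := decomp P (A := fun x => decide ((z₁ : EReal) < (x : EReal)))
      (B := fun x => decide ((z₂ : EReal) < (x : EReal)))
      (Φ := fun y => P.G y ↑z₁) (Ψ := fun y => P.G y ↑z₂) (ρ := P.c)
      (P.hG_meas _) (P.hG_meas _) (bG P _) (bG P _)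
      (fun x => P.hG_eq x ↑z₁) (fun x => P.hG_eq x ↑z₂) x
  rw [thrKer_app, hd]
  congr 1
  by_cases h1 : (z₁ : EReal) < (x : EReal) <;> by_cases h2 : (z₂ : EReal) < (x : EReal)
  · rw [decide_eq_true h1, decide_eq_true h2, if_pos rfl,
      Set.indicator_of_notMem (fun hmem => absurd (EReal.coe_lt_coe_iff.mp h2)
        (not_lt.mpr hmem.2))]
  · rw [decide_eq_true h1, decide_eq_false h2, if_neg (by simp),
      Set.indicator_of_mem (show x ∈ Set.Ioc z₁ z₂ from ⟨EReal.coe_lt_coe_iff.mp h1,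
        le_of_not_gt (fun hc => h2 (EReal.coe_lt_coe_iff.mpr hc))⟩)]
    simp only [if_pos]
    rw [one_mul]
    rfl
  · exact absurd (lt_of_le_of_lt (EReal.coe_le_coe_iff.mpr h12) h2) h1
  · rw [decide_eq_false h1, decide_eq_false h2, if_pos rfl,
      Set.indicator_of_notMem (fun hmem => h1 (EReal.coe_lt_coe_iff.mpr hmem.1))]

lemma decompG' {z₁ z₂ : ℝ} (h12 : z₁ ≤ z₂) (x : ℝ) :
    P.G x ↑z₂ - P.G x ↑z₁ = -((Set.Ioc z₁ z₂).indicator (fun y => P.g y ↑z₂) x)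
      + P.β * ∫ y, (P.G y ↑z₂ - P.G y ↑z₁) ∂(P.thrKer ↑z₁ x) := by
  have hd := decomp P (A := fun x => decide ((z₂ : EReal) < (x : EReal)))
      (B := fun x => decide ((z₁ : EReal) < (x : EReal)))
      (Φ := fun y => P.G y ↑z₂) (Ψ := fun y => P.G y ↑z₁) (ρ := P.c)
      (P.hG_meas _) (P.hG_meas _) (bG P _) (bG P _)
      (fun x => P.hG_eq x ↑z₂) (fun x => P.hG_eq x ↑z₁) x
  rw [thrKer_app, hd]
  congr 1
  by_cases h1 : (z₁ : EReal) < (x : EReal) <;> by_cases h2 : (z₂ : EReal) < (x : EReal)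
  · rw [decide_eq_true h1, decide_eq_true h2, if_pos rfl,
      Set.indicator_of_notMem (fun hmem => absurd (EReal.coe_lt_coe_iff.mp h2)
        (not_lt.mpr hmem.2))]
    simp
  · rw [decide_eq_true h1, decide_eq_false h2, if_neg (by simp),
      Set.indicator_of_mem (show x ∈ Set.Ioc z₁ z₂ from ⟨EReal.coe_lt_coe_iff.mp h1,
        le_of_not_gt (fun hc => h2 (EReal.coe_lt_coe_iff.mpr hc))⟩)]
    simp only [if_neg Bool.false_ne_true]
    rw [neg_one_mul]
    rfl
  · exact absurd (lt_of_le_of_lt (EReal.coe_le_coe_iff.mpr h12) h2) h1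
  · rw [decide_eq_false h1, decide_eq_false h2, if_pos rfl,
      Set.indicator_of_notMem (fun hmem => h1 (EReal.coe_lt_coe_iff.mpr hmem.1))]
    simp

lemma decompFm {z z₀ : ℝ} (hz : z < z₀) (x : ℝ) :
    P.F x ↑z - P.Fm x ↑z₀ = (Set.Ioo z z₀).indicator (fun y => P.f y ↑z) x
      + P.β * ∫ y, (P.F y ↑z - P.Fm y ↑z₀) ∂(P.thrKerM ↑z₀ x) := by
  have hd := decomp P (A := fun x => decide ((z : EReal) < (x : EReal)))
      (B := fun x => decide ((z₀ : EReal) ≤ (x : EReal)))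
      (Φ := fun y => P.F y ↑z) (Ψ := fun y => P.Fm y ↑z₀) (ρ := P.r)
      (P.hF_meas _) (P.hFm_meas _) (bF P _) (bFm P _)
      (fun x => P.hF_eq x ↑z) (fun x => P.hFm_eq x ↑z₀) x
  rw [thrKerM_app, hd]
  congr 1
  by_cases h1 : (z : EReal) < (x : EReal) <;> by_cases h2 : (z₀ : EReal) ≤ (x : EReal)
  · rw [decide_eq_true h1, decide_eq_true h2, if_pos rfl,
      Set.indicator_of_notMem (fun hmem => absurd (EReal.coe_le_coe_iff.mp h2)
        (not_le.mpr hmem.2))]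
  · rw [decide_eq_true h1, decide_eq_false h2, if_neg (by simp),
      Set.indicator_of_mem (show x ∈ Set.Ioo z z₀ from ⟨EReal.coe_lt_coe_iff.mp h1,
        lt_of_not_ge (fun hc => h2 (EReal.coe_le_coe_iff.mpr hc))⟩)]
    simp only [if_pos]
    rw [one_mul]
    rfl
  · exact absurd (lt_of_lt_of_le (EReal.coe_lt_coe_iff.mpr hz) h2) h1
  · rw [decide_eq_false h1, decide_eq_false h2, if_pos rfl,
      Set.indicator_of_notMem (fun hmem => h1 (EReal.coe_lt_coe_iff.mpr hmem.1))]

lemma decompGm {z z₀ : ℝ} (hz : z < z₀) (x : ℝ) :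
    P.G x ↑z - P.Gm x ↑z₀ = (Set.Ioo z z₀).indicator (fun y => P.g y ↑z) x
      + P.β * ∫ y, (P.G y ↑z - P.Gm y ↑z₀) ∂(P.thrKerM ↑z₀ x) := by
  have hd := decomp P (A := fun x => decide ((z : EReal) < (x : EReal)))
      (B := fun x => decide ((z₀ : EReal) ≤ (x : EReal)))
      (Φ := fun y => P.G y ↑z) (Ψ := fun y => P.Gm y ↑z₀) (ρ := P.c)
      (P.hG_meas _) (P.hGm_meas _) (bG P _) (bGm P _)
      (fun x => P.hG_eq x ↑z) (fun x => P.hGm_eq x ↑z₀) x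
  rw [thrKerM_app, hd]
  congr 1
  by_cases h1 : (z : EReal) < (x : EReal) <;> by_cases h2 : (z₀ : EReal) ≤ (x : EReal)
  · rw [decide_eq_true h1, decide_eq_true h2, if_pos rfl,
      Set.indicator_of_notMem (fun hmem => absurd (EReal.coe_le_coe_iff.mp h2)
        (not_le.mpr hmem.2))]
  · rw [decide_eq_true h1, decide_eq_false h2, if_neg (by simp),
      Set.indicator_of_mem (show x ∈ Set.Ioo z z₀ from ⟨EReal.coe_lt_coe_iff.mp h1,
        lt_of_not_ge (fun hc => h2 (EReal.coe_le_coe_iff.mpr hc))⟩)]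
    simp only [if_pos]
    rw [one_mul]
    rfl
  · exact absurd (lt_of_lt_of_le (EReal.coe_lt_coe_iff.mpr hz) h2) h1
  · rw [decide_eq_false h1, decide_eq_false h2, if_pos rfl,
      Set.indicator_of_notMem (fun hmem => h1 (EReal.coe_lt_coe_iff.mpr hmem.1))]

lemma decompF0 (z₀ : ℝ) (x : ℝ) :
    P.F x ↑z₀ - P.Fm x ↑z₀ = -(({z₀} : Set ℝ).indicator (fun y => P.f y ↑z₀) x)
      + P.β * ∫ y, (P.F y ↑z₀ - P.Fm y ↑z₀) ∂(P.thrKerM ↑z₀ x) := by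
  have hd := decomp P (A := fun x => decide ((z₀ : EReal) < (x : EReal)))
      (B := fun x => decide ((z₀ : EReal) ≤ (x : EReal)))
      (Φ := fun y => P.F y ↑z₀) (Ψ := fun y => P.Fm y ↑z₀) (ρ := P.r)
      (P.hF_meas _) (P.hFm_meas _) (bF P _) (bFm P _)
      (fun x => P.hF_eq x ↑z₀) (fun x => P.hFm_eq x ↑z₀) x
  rw [thrKerM_app, hd]
  congr 1
  by_cases h1 : (z₀ : EReal) < (x : EReal) <;> by_cases h2 : (z₀ : EReal) ≤ (x : EReal)
  · rw [decide_eq_true h1, decide_eq_true h2, if_pos rfl,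
      Set.indicator_of_notMem (fun hmem => absurd (Set.mem_singleton_iff.mp hmem)
        (fun hxe => (lt_irrefl _ (hxe ▸ EReal.coe_lt_coe_iff.mp h1)).elim))]
    simp
  · exact absurd h1.le h2
  · have hxz : x = z₀ := le_antisymm (le_of_not_gt
      (fun hc => h1 (EReal.coe_lt_coe_iff.mpr hc))) (EReal.coe_le_coe_iff.mp h2)
    rw [decide_eq_false h1, decide_eq_true h2, if_neg (by simp),
      Set.indicator_of_mem (Set.mem_singleton_iff.mpr hxz)]
    simp only [if_neg Bool.false_ne_true]
    rw [neg_one_mul]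
    rfl
  · rw [decide_eq_false h1, decide_eq_false h2, if_pos rfl,
      Set.indicator_of_notMem (fun hmem => h2 (le_of_eq
        (by rw [Set.mem_singleton_iff.mp hmem])))]
    simp

lemma decompG0 (z₀ : ℝ) (x : ℝ) :
    P.G x ↑z₀ - P.Gm x ↑z₀ = -(({z₀} : Set ℝ).indicator (fun y => P.g y ↑z₀) x)
      + P.β * ∫ y, (P.G y ↑z₀ - P.Gm y ↑z₀) ∂(P.thrKerM ↑z₀ x) := by
  have hd := decomp P (A := fun x => decide ((z₀ : EReal) < (x : EReal)))
      (B := fun x => decide ((z₀ : EReal) ≤ (x : EReal)))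
      (Φ := fun y => P.G y ↑z₀) (Ψ := fun y => P.Gm y ↑z₀) (ρ := P.c)
      (P.hG_meas _) (P.hGm_meas _) (bG P _) (bGm P _)
      (fun x => P.hG_eq x ↑z₀) (fun x => P.hGm_eq x ↑z₀) x
  rw [thrKerM_app, hd]
  congr 1
  by_cases h1 : (z₀ : EReal) < (x : EReal) <;> by_cases h2 : (z₀ : EReal) ≤ (x : EReal)
  · rw [decide_eq_true h1, decide_eq_true h2, if_pos rfl,
      Set.indicator_of_notMem (fun hmem => absurd (Set.mem_singleton_iff.mp hmem)
        (fun hxe => (lt_irrefl _ (hxe ▸ EReal.coe_lt_coe_iff.mp h1)).elim))]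
    simp
  · exact absurd h1.le h2
  · have hxz : x = z₀ := le_antisymm (le_of_not_gt
      (fun hc => h1 (EReal.coe_lt_coe_iff.mpr hc))) (EReal.coe_le_coe_iff.mp h2)
    rw [decide_eq_false h1, decide_eq_true h2, if_neg (by simp),
      Set.indicator_of_mem (Set.mem_singleton_iff.mpr hxz)]
    simp only [if_neg Bool.false_ne_true]
    rw [neg_one_mul]
    rfl
  · rw [decide_eq_false h1, decide_eq_false h2, if_pos rfl,
      Set.indicator_of_notMem (fun hmem => h2 (le_of_eq
        (by rw [Set.mem_singleton_iff.mp hmem])))]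
    simp


lemma G_anti (h1 : P.PCLI1) (x : ℝ) : Antitone fun t : ℝ => P.G x ↑t := by
  intro z₁ z₂ h12
  have hpos := ML_pos P (P.thrKer ↑z₂) (thrKer_w P _) (thrKer_drift P _)
    (D := fun y => P.G y ↑z₁ - P.G y ↑z₂) ((P.hG_meas _).sub (P.hG_meas _))
    (sub_wb P (bG P _) (bG P _))
    (fun y => Set.indicator_nonneg (fun y' _ => (h1 y' _).le) y)
    (decompG P h12)
  exact sub_nonneg.mp (hpos x).2

lemma dirac_prob (x : ℝ) : IsProbabilityMeasure (Measure.dirac x : Measure ℝ) := by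
  infer_instance

lemma dirac_w (x : ℝ) : Integrable P.w (Measure.dirac x) := by
  refine ⟨P.hw_meas.aestronglyMeasurable, ?_⟩
  rw [HasFiniteIntegral]
  rw [lintegral_dirac' x P.hw_meas.enorm]
  exact enorm_lt_top

lemma G_rc (h1 : P.PCLI1) (x z₁ : ℝ) :
    ContinuousWithinAt (fun t : ℝ => P.G x ↑t) (Ici z₁) z₁ := by
  haveI := thrKer_markov P (z₁ : EReal)
  set c := 2 * P.M / (1 - P.γ) with hc
  have hcpos : 0 < c := div_pos (by linarith [P.hM]) (hγpos P)
  set u : ℕ → ℝ := fun n => c * ∑' t : ℕ, P.β ^ t *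
    ∫ y, (Set.Ioc z₁ (z₁ + 1/(n+1))).indicator P.w y
      ∂(kerIter (P.thrKer ↑z₁) t (Measure.dirac x)) with hu
  have hulim : Tendsto u atTop (𝓝 0) := by
    have h0 := ML_tend P (P.thrKer ↑z₁) (thrKer_w P _) (thrKer_drift P _)
      (dirac_prob x) (dirac_w P x)
      (fun n => Set.Ioc z₁ (z₁ + 1/(n+1))) (fun n => measurableSet_Ioc) ?hlim
    · simpa [hu] using h0.const_mul c
    case hlim =>
      intro y
      by_cases hy : z₁ < y
      · have ht : Tendsto (fun n : ℕ => 1/((n:ℝ)+1)) atTop (𝓝 0) :=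
          tendsto_one_div_add_atTop_nhds_zero_nat
        filter_upwards [ht.eventually_lt_const (by linarith : (0:ℝ) < y - z₁)] with n hn
        intro hmem
        have := hmem.2
        linarith
      · exact Eventually.of_forall fun n hmem => hy hmem.1
  have hbd : ∀ n : ℕ, |P.G x ↑(z₁ + 1/(n+1)) - P.G x ↑z₁| ≤ u n := by
    intro n
    have hpos1 : (0:ℝ) < 1/((n:ℝ)+1) := by positivity
    have hle : z₁ ≤ z₁ + 1/((n:ℝ)+1) := by linarith
    have hd := decompG' P hle
    have hb := ML_bound P (P.thrKer ↑z₁) (thrKer_w P _) (thrKer_drift P _)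
      (D := fun y => P.G y ↑(z₁ + 1/(n+1)) - P.G y ↑z₁)
      ((P.hG_meas _).sub (P.hG_meas _))
      (hhm := ((mg P _).indicator measurableSet_Ioc).neg)
      (sub_wb P (bG P _) (bG P _)) (s := Set.Ioc z₁ (z₁ + 1/(n+1))) measurableSet_Ioc
      (hh := fun y => by
        rw [Pi.neg_apply, abs_neg]
        exact ind_wb2 P (bg P (((z₁ + 1/(n+1)) : ℝ) : EReal)) (le_of_lt hcpos) y)
      (heq := fun y => hd y)
      (dirac_prob x) (dirac_w P x)
    rw [integral_dirac _ x] at hb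
    exact hb
  have hanti := G_anti P h1 x
  rw [Metric.continuousWithinAt_iff]
  intro ε hε
  obtain ⟨n, hn⟩ := (hulim.eventually_lt_const hε).exists
  refine ⟨1/(n+1), by positivity, ?_⟩
  intro t ht hdist
  rw [Real.dist_eq] at hdist ⊢
  have h1t : z₁ ≤ t := ht
  have h2t : t ≤ z₁ + 1/((n:ℝ)+1) := by
    rw [abs_of_nonneg (by linarith)] at hdist
    linarith
  have hA : P.G x ↑t ≤ P.G x ↑z₁ := hanti h1t
  have hB : P.G x ↑(z₁ + 1/((n:ℝ)+1)) ≤ P.G x ↑t := hanti h2t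
  have hgap := hbd n
  rw [abs_of_nonpos (by linarith : P.G x ↑(z₁ + 1/((n:ℝ)+1)) - P.G x ↑z₁ ≤ 0)] at hgap
  rw [abs_of_nonpos (by linarith : P.G x ↑t - P.G x ↑z₁ ≤ 0)]
  linarith

noncomputable def sfG (h1 : P.PCLI1) (x : ℝ) : StieltjesFunction ℝ where
  toFun := fun t => -P.G x ↑t
  mono' := fun a b hab => neg_le_neg (G_anti P h1 x hab)
  right_continuous' := fun t => (G_rc P h1 x t).neg

lemma sandwich_pt (h1 : P.PCLI1) (h2m : Monotone P.mStar) (h3 : P.PCLI3) (x : ℝ)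
    {z₁ z₂ : ℝ} (hz : z₁ < z₂) :
    P.mStar z₁ * (P.G x ↑z₁ - P.G x ↑z₂) ≤ P.F x ↑z₁ - P.F x ↑z₂ ∧
    P.F x ↑z₁ - P.F x ↑z₂ ≤ P.mStar z₂ * (P.G x ↑z₁ - P.G x ↑z₂) := by
  set ν := (sfG P h1 x).measure with hν
  have hLS : IsLSMeasureOfAnti (fun z : ℝ => P.G x ↑z) ν := by
    intro a b hab
    rw [hν, StieltjesFunction.measure_Ioc]
    have hsf : ∀ t : ℝ, (sfG P h1 x) t = -P.G x ↑t := fun t => rfl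
    rw [hsf, hsf]
    congr 1
    ring
  have hkey := h3 x ν hLS z₁ z₂ hz
  have hkey' : P.F x ↑z₁ - P.F x ↑z₂ = ∫ z in Set.Ioc z₁ z₂, P.mStar z ∂ν := by linarith
  have hGd : 0 ≤ P.G x ↑z₁ - P.G x ↑z₂ := sub_nonneg.mpr (G_anti P h1 x hz.le)
  have hνI : ν (Set.Ioc z₁ z₂) = ENNReal.ofReal (P.G x ↑z₁ - P.G x ↑z₂) := hLS z₁ z₂ hz.le
  have htoReal : (ν (Set.Ioc z₁ z₂)).toReal = P.G x ↑z₁ - P.G x ↑z₂ := by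
    rw [hνI, ENNReal.toReal_ofReal hGd]
  haveI : IsFiniteMeasure (ν.restrict (Set.Ioc z₁ z₂)) := by
    constructor
    rw [Measure.restrict_apply_univ, hνI]
    exact ENNReal.ofReal_lt_top
  have hmm : Measurable P.mStar := h2m.measurable
  have hMint : IntegrableOn P.mStar (Set.Ioc z₁ z₂) ν := by
    refine Integrable.mono' (integrable_const (max |P.mStar z₁| |P.mStar z₂|))
      hmm.aestronglyMeasurable.restrict ?_
    refine (ae_restrict_iff' measurableSet_Ioc).mpr (ae_of_all _ fun y hy => ?_)
    rw [Real.norm_eq_abs, abs_le]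
    have l1 : P.mStar z₁ ≤ P.mStar y := h2m hy.1.le
    have l2 : P.mStar y ≤ P.mStar z₂ := h2m hy.2
    constructor
    · have := neg_abs_le (P.mStar z₁)
      have := le_max_left |P.mStar z₁| |P.mStar z₂|
      linarith
    · have := le_abs_self (P.mStar z₂)
      have := le_max_right |P.mStar z₁| |P.mStar z₂|
      linarith
  constructor
  · calc P.mStar z₁ * (P.G x ↑z₁ - P.G x ↑z₂)
        = ∫ _ in Set.Ioc z₁ z₂, P.mStar z₁ ∂ν := by
          rw [setIntegral_const, measureReal_def, htoReal, smul_eq_mul, mul_comm]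
      _ ≤ ∫ z in Set.Ioc z₁ z₂, P.mStar z ∂ν :=
          setIntegral_mono_on (integrable_const _) hMint measurableSet_Ioc
            (fun y hy => h2m hy.1.le)
      _ = P.F x ↑z₁ - P.F x ↑z₂ := hkey'.symm
  · calc P.F x ↑z₁ - P.F x ↑z₂ = ∫ z in Set.Ioc z₁ z₂, P.mStar z ∂ν := hkey'
      _ ≤ ∫ _ in Set.Ioc z₁ z₂, P.mStar z₂ ∂ν :=
          setIntegral_mono_on hMint (integrable_const _) measurableSet_Ioc
            (fun y hy => h2m hy.2)
      _ = P.mStar z₂ * (P.G x ↑z₁ - P.G x ↑z₂) := by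
          rw [setIntegral_const, measureReal_def, htoReal, smul_eq_mul, mul_comm]

lemma int_p {p : Measure ℝ} (hp : P.IsInitDist p) {ψ : ℝ → ℝ} (hm : Measurable ψ)
    {C : ℝ} (hb : ∀ x, |ψ x| ≤ C * P.w x) : Integrable ψ p :=
  integrable_wb P hp.2 hm hb

lemma intF (p : Measure ℝ) (hp : P.IsInitDist p) (z : EReal) :
    Integrable (fun x => P.F x z) p := int_p P hp (P.hF_meas z) (bF P z)

lemma intG (p : Measure ℝ) (hp : P.IsInitDist p) (z : EReal) :
    Integrable (fun x => P.G x z) p := int_p P hp (P.hG_meas z) (bG P z)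

lemma intFm (p : Measure ℝ) (hp : P.IsInitDist p) (z : EReal) :
    Integrable (fun x => P.Fm x z) p := int_p P hp (P.hFm_meas z) (bFm P z)

lemma intGm (p : Measure ℝ) (hp : P.IsInitDist p) (z : EReal) :
    Integrable (fun x => P.Gm x z) p := int_p P hp (P.hGm_meas z) (bGm P z)

lemma sandwich_p (h1 : P.PCLI1) (h2m : Monotone P.mStar) (h3 : P.PCLI3)
    {p : Measure ℝ} (hp : P.IsInitDist p) {z₁ z₂ : ℝ} (hz : z₁ < z₂) :
    P.mStar z₁ * (P.Gp p ↑z₁ - P.Gp p ↑z₂) ≤ P.Fp p ↑z₁ - P.Fp p ↑z₂ ∧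
    P.Fp p ↑z₁ - P.Fp p ↑z₂ ≤ P.mStar z₂ * (P.Gp p ↑z₁ - P.Gp p ↑z₂) := by
  have e1 : P.Fp p ↑z₁ - P.Fp p ↑z₂ = ∫ x, (P.F x ↑z₁ - P.F x ↑z₂) ∂p := by
    unfold Bandit.Fp
    rw [integral_sub (intF P p hp _) (intF P p hp _)]
  have e2 : ∀ m : ℝ, m * (P.Gp p ↑z₁ - P.Gp p ↑z₂)
      = ∫ x, m * (P.G x ↑z₁ - P.G x ↑z₂) ∂p := by
    intro m
    unfold Bandit.Gp
    rw [integral_const_mul, integral_sub (intG P p hp _) (intG P p hp _)]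
  constructor
  · rw [e1, e2]
    exact integral_mono (((intG P p hp _).sub (intG P p hp _)).const_mul _)
      ((intF P p hp _).sub (intF P p hp _)) (fun x => (sandwich_pt P h1 h2m h3 x hz).1)
  · rw [e1, e2]
    exact integral_mono ((intF P p hp _).sub (intF P p hp _))
      (((intG P p hp _).sub (intG P p hp _)).const_mul _)
      (fun x => (sandwich_pt P h1 h2m h3 x hz).2)


lemma setInd_pos (h1 : P.PCLI1) {p : Measure ℝ} (hp : P.IsInitDist p)
    (hsupp : ∀ s : Set ℝ, IsOpen s → s.Nonempty → 0 < p s) {z₁ z₂ : ℝ} (hz : z₁ < z₂)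
    {s : Set ℝ} (hs : MeasurableSet s) (hss : Set.Ioo z₁ z₂ ⊆ s) (z : EReal) :
    0 < ∫ x in s, P.g x z ∂p := by
  have hnn : 0 ≤ᵐ[p.restrict s] fun x => P.g x z :=
    ae_of_all _ fun x => (h1 x z).le
  have hint : IntegrableOn (fun x => P.g x z) s p :=
    (int_p P hp (mg P z) (bg P z)).integrableOn
  rw [setIntegral_pos_iff_support_of_nonneg_ae hnn hint]
  have hsub : Set.Ioo z₁ z₂ ⊆ Function.support (fun x => P.g x z) ∩ s := by
    intro y hy
    exact ⟨ne_of_gt (h1 y z), hss hy⟩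
  calc (0:ENNReal) < p (Set.Ioo z₁ z₂) := hsupp _ isOpen_Ioo (Set.nonempty_Ioo.mpr hz)
    _ ≤ p (Function.support (fun x => P.g x z) ∩ s) := measure_mono hsub

lemma Gp_strict (h1 : P.PCLI1) {p : Measure ℝ} (hp : P.IsInitDist p)
    (hsupp : ∀ s : Set ℝ, IsOpen s → s.Nonempty → 0 < p s) {z₁ z₂ : ℝ} (hz : z₁ < z₂) :
    0 < P.Gp p ↑z₁ - P.Gp p ↑z₂ := by
  have hpos := ML_pos P (P.thrKer ↑z₂) (thrKer_w P _) (thrKer_drift P _)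
    (D := fun y => P.G y ↑z₁ - P.G y ↑z₂) ((P.hG_meas _).sub (P.hG_meas _))
    (sub_wb P (bG P _) (bG P _))
    (fun y => Set.indicator_nonneg (fun y' _ => (h1 y' _).le) y)
    (decompG P hz.le)
  have e1 : P.Gp p ↑z₁ - P.Gp p ↑z₂ = ∫ x, (P.G x ↑z₁ - P.G x ↑z₂) ∂p := by
    unfold Bandit.Gp
    rw [integral_sub (intG P p hp _) (intG P p hp _)]
  have hindint : Integrable ((Set.Ioc z₁ z₂).indicator (fun y => P.g y ↑z₁)) p :=
    int_p P hp ((mg P _).indicator measurableSet_Ioc)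
      (ind_wb P (bg P _) (div_nonneg (by linarith [P.hM]) (hγpos P).le))
  have step1 : ∫ x, (Set.Ioc z₁ z₂).indicator (fun y => P.g y ↑z₁) x ∂p
      ≤ ∫ x, (P.G x ↑z₁ - P.G x ↑z₂) ∂p :=
    integral_mono hindint ((intG P p hp _).sub (intG P p hp _)) (fun x => (hpos x).1)
  have step2 : 0 < ∫ x, (Set.Ioc z₁ z₂).indicator (fun y => P.g y ↑z₁) x ∂p := by
    rw [integral_indicator measurableSet_Ioc]
    exact setInd_pos P h1 hp hsupp hz measurableSet_Ioc Set.Ioo_subset_Ioc_self _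
  rw [e1]
  linarith

lemma GpGmp_pos (h1 : P.PCLI1) {p : Measure ℝ} (hp : P.IsInitDist p)
    (hsupp : ∀ s : Set ℝ, IsOpen s → s.Nonempty → 0 < p s) {z z₀ : ℝ} (hz : z < z₀) :
    0 < P.Gp p ↑z - P.Gmp p ↑z₀ := by
  have hpos := ML_pos P (P.thrKerM ↑z₀) (thrKerM_w P _) (thrKerM_drift P _)
    (D := fun y => P.G y ↑z - P.Gm y ↑z₀) ((P.hG_meas _).sub (P.hGm_meas _))
    (sub_wb P (bG P _) (bGm P _))
    (fun y => Set.indicator_nonneg (fun y' _ => (h1 y' _).le) y)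
    (decompGm P hz)
  have e1 : P.Gp p ↑z - P.Gmp p ↑z₀ = ∫ x, (P.G x ↑z - P.Gm x ↑z₀) ∂p := by
    unfold Bandit.Gp Bandit.Gmp
    rw [integral_sub (intG P p hp _) (intGm P p hp _)]
  have hindint : Integrable ((Set.Ioo z z₀).indicator (fun y => P.g y ↑z)) p :=
    int_p P hp ((mg P _).indicator measurableSet_Ioo)
      (ind_wb P (bg P _) (div_nonneg (by linarith [P.hM]) (hγpos P).le))
  have step1 : ∫ x, (Set.Ioo z z₀).indicator (fun y => P.g y ↑z) x ∂p
      ≤ ∫ x, (P.G x ↑z - P.Gm x ↑z₀) ∂p :=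
    integral_mono hindint ((intG P p hp _).sub (intGm P p hp _)) (fun x => (hpos x).1)
  have step2 : 0 < ∫ x, (Set.Ioo z z₀).indicator (fun y => P.g y ↑z) x ∂p := by
    rw [integral_indicator measurableSet_Ioo]
    exact setInd_pos P h1 hp hsupp hz measurableSet_Ioo subset_rfl _
  rw [e1]
  linarith

lemma decompGm0 (z₀ : ℝ) (x : ℝ) :
    P.Gm x ↑z₀ - P.G x ↑z₀ = ({z₀} : Set ℝ).indicator (fun y => P.g y ↑z₀) x
      + P.β * ∫ y, (P.Gm y ↑z₀ - P.G y ↑z₀) ∂(P.thrKerM ↑z₀ x) := by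
  have hd := decompG0 P z₀ x
  have hneg : ∫ y, (P.Gm y ↑z₀ - P.G y ↑z₀) ∂(P.thrKerM ↑z₀ x)
      = -∫ y, (P.G y ↑z₀ - P.Gm y ↑z₀) ∂(P.thrKerM ↑z₀ x) := by
    rw [← integral_neg]
    congr 1
    funext y
    ring
  rw [hneg]
  linarith

lemma Gm_ge (h1 : P.PCLI1) (z₀ : ℝ) : ∀ x, 0 ≤ P.Gm x ↑z₀ - P.G x ↑z₀ := by
  intro x
  have hpos := ML_pos P (P.thrKerM ↑z₀) (thrKerM_w P _) (thrKerM_drift P _)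
    (D := fun y => P.Gm y ↑z₀ - P.G y ↑z₀) ((P.hGm_meas _).sub (P.hG_meas _))
    (sub_wb P (bGm P _) (bG P _))
    (fun y => Set.indicator_nonneg (fun y' _ => (h1 y' _).le) y)
    (decompGm0 P z₀)
  exact (hpos x).2

lemma propor (h1 : P.PCLI1) (z₀ : ℝ) :
    ∀ x, P.F x ↑z₀ - P.Fm x ↑z₀ = P.mStar z₀ * (P.G x ↑z₀ - P.Gm x ↑z₀) := by
  set m0 := P.mStar z₀ with hm0
  set E : ℝ → ℝ := fun x => (P.F x ↑z₀ - P.Fm x ↑z₀) - m0 * (P.G x ↑z₀ - P.Gm x ↑z₀) with hE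
  have hEm : Measurable E :=
    ((P.hF_meas _).sub (P.hFm_meas _)).sub
      (((P.hG_meas _).sub (P.hGm_meas _)).const_mul m0)
  have hEb : ∀ x, |E x| ≤ ((P.M / (1 - P.γ) + P.M / (1 - P.γ))
      + |m0| * (P.M / (1 - P.γ) + P.M / (1 - P.γ))) * P.w x := by
    intro x
    have h1' := sub_wb P (bF P ((z₀:ℝ):EReal)) (bFm P ((z₀:ℝ):EReal)) x
    have h2' := sub_wb P (bG P ((z₀:ℝ):EReal)) (bGm P ((z₀:ℝ):EReal)) x
    have h3' : |E x| ≤ |P.F x ↑z₀ - P.Fm x ↑z₀| + |m0| * |P.G x ↑z₀ - P.Gm x ↑z₀| := by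
      rw [hE]
      calc |P.F x ↑z₀ - P.Fm x ↑z₀ - m0 * (P.G x ↑z₀ - P.Gm x ↑z₀)|
          ≤ |P.F x ↑z₀ - P.Fm x ↑z₀| + |m0 * (P.G x ↑z₀ - P.Gm x ↑z₀)| := abs_sub _ _
        _ = |P.F x ↑z₀ - P.Fm x ↑z₀| + |m0| * |P.G x ↑z₀ - P.Gm x ↑z₀| := by rw [abs_mul]
    nlinarith [abs_nonneg m0, abs_nonneg (P.G x ↑z₀ - P.Gm x ↑z₀)]
  have heq : ∀ x, E x = P.β * ∫ y, E y ∂(P.thrKerM ↑z₀ x) := by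
    intro x
    have hF := decompF0 P z₀ x
    have hG := decompG0 P z₀ x
    have hi : ∫ y, E y ∂(P.thrKerM ↑z₀ x)
        = (∫ y, (P.F y ↑z₀ - P.Fm y ↑z₀) ∂(P.thrKerM ↑z₀ x))
          - m0 * ∫ y, (P.G y ↑z₀ - P.Gm y ↑z₀) ∂(P.thrKerM ↑z₀ x) := by
      rw [hE]
      show ∫ y, (P.F y ↑z₀ - P.Fm y ↑z₀ - m0 * (P.G y ↑z₀ - P.Gm y ↑z₀)) ∂(P.thrKerM ↑z₀ x) = _
      rw [integral_sub (f := fun y => P.F y ↑z₀ - P.Fm y ↑z₀)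
        (g := fun y => m0 * (P.G y ↑z₀ - P.Gm y ↑z₀)) (integrable_wb P (thrKerM_w P _ x)
        ((P.hF_meas _).sub (P.hFm_meas _)) (sub_wb P (bF P _) (bFm P _)))
        ((integrable_wb P (thrKerM_w P _ x)
          ((P.hG_meas _).sub (P.hGm_meas _)) (sub_wb P (bG P _) (bGm P _))).const_mul m0),
        integral_const_mul]
    have hind : ({z₀} : Set ℝ).indicator (fun y => P.f y ↑z₀) x
        = m0 * ({z₀} : Set ℝ).indicator (fun y => P.g y ↑z₀) x := by
      by_cases hx : x ∈ ({z₀} : Set ℝ)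
      · rw [Set.indicator_of_mem hx, Set.indicator_of_mem hx]
        have hxz : x = z₀ := hx
        subst hxz
        rw [hm0]
        unfold Bandit.mStar Bandit.m
        rw [div_mul_cancel₀]
        exact ne_of_gt (h1 x _)
      · rw [Set.indicator_of_notMem hx, Set.indicator_of_notMem hx, mul_zero]
    have hExpand : E x = (P.F x ↑z₀ - P.Fm x ↑z₀) - m0 * (P.G x ↑z₀ - P.Gm x ↑z₀) := rfl
    rw [hExpand, hF, hG, hi, hind]
    ring
  have hzero := ML_zero P (P.thrKerM ↑z₀) (thrKerM_w P _) (thrKerM_drift P _) hEm hEb heq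
  intro x
  have := hzero x
  rw [hE] at this
  simp only at this
  linarith

lemma tend_to_m (h1 : P.PCLI1) {p : Measure ℝ} (hp : P.IsInitDist p) (z₀ : ℝ) {zn : ℕ → ℝ}
    (hzn : ∀ n, zn n < z₀) (hlim : Tendsto zn atTop (𝓝 z₀)) :
    Tendsto (fun n => P.Fp p ↑(zn n)) atTop (𝓝 (P.Fmp p ↑z₀)) ∧
    Tendsto (fun n => P.Gp p ↑(zn n)) atTop (𝓝 (P.Gmp p ↑z₀)) := by
  haveI := hp.1
  haveI := thrKerM_markov P (z₀ : EReal)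
  set c := 2 * P.M / (1 - P.γ) with hc
  have hcpos : 0 < c := div_pos (by linarith [P.hM]) (hγpos P)
  have hset : ∀ y, ∀ᶠ n in atTop, y ∉ Set.Ioo (zn n) z₀ := by
    intro y
    by_cases hy : y < z₀
    · filter_upwards [hlim.eventually_const_lt hy] with n hn
      intro hmem
      exact absurd hmem.1 (not_lt.mpr hn.le)
    · exact Eventually.of_forall fun n hmem => hy hmem.2
  have hu := ML_tend P (P.thrKerM ↑z₀) (thrKerM_w P _) (thrKerM_drift P _) hp.1 hp.2
    (fun n => Set.Ioo (zn n) z₀) (fun n => measurableSet_Ioo) hset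
  have huc : Tendsto (fun n => c * ∑' t : ℕ, P.β ^ t *
      ∫ y, (Set.Ioo (zn n) z₀).indicator P.w y ∂(kerIter (P.thrKerM ↑z₀) t p))
      atTop (𝓝 0) := by
    simpa using hu.const_mul c
  constructor
  · have hbnd : ∀ n : ℕ, ‖P.Fp p ↑(zn n) - P.Fmp p ↑z₀‖ ≤ c * ∑' t : ℕ, P.β ^ t *
        ∫ y, (Set.Ioo (zn n) z₀).indicator P.w y ∂(kerIter (P.thrKerM ↑z₀) t p) := by
      intro n
      have e : P.Fp p ↑(zn n) - P.Fmp p ↑z₀ = ∫ x, (P.F x ↑(zn n) - P.Fm x ↑z₀) ∂p := by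
        unfold Bandit.Fp Bandit.Fmp
        rw [integral_sub (intF P p hp _) (intFm P p hp _)]
      rw [Real.norm_eq_abs, e]
      exact ML_bound P (P.thrKerM ↑z₀) (thrKerM_w P _) (thrKerM_drift P _)
        ((P.hF_meas _).sub (P.hFm_meas _)) ((mf P _).indicator measurableSet_Ioo)
        (sub_wb P (bF P _) (bFm P _)) measurableSet_Ioo
        (fun y => ind_wb2 P (bf P (((zn n) : ℝ) : EReal)) hcpos.le y)
        (fun y => decompFm P (hzn n) y) hp.1 hp.2
    have h0 : Tendsto (fun n => P.Fp p ↑(zn n) - P.Fmp p ↑z₀) atTop (𝓝 0) :=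
      squeeze_zero_norm hbnd huc
    have := h0.add (tendsto_const_nhds (x := P.Fmp p ↑z₀))
    simpa using this
  · have hbnd : ∀ n : ℕ, ‖P.Gp p ↑(zn n) - P.Gmp p ↑z₀‖ ≤ c * ∑' t : ℕ, P.β ^ t *
        ∫ y, (Set.Ioo (zn n) z₀).indicator P.w y ∂(kerIter (P.thrKerM ↑z₀) t p) := by
      intro n
      have e : P.Gp p ↑(zn n) - P.Gmp p ↑z₀ = ∫ x, (P.G x ↑(zn n) - P.Gm x ↑z₀) ∂p := by
        unfold Bandit.Gp Bandit.Gmp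
        rw [integral_sub (intG P p hp _) (intGm P p hp _)]
      rw [Real.norm_eq_abs, e]
      exact ML_bound P (P.thrKerM ↑z₀) (thrKerM_w P _) (thrKerM_drift P _)
        ((P.hG_meas _).sub (P.hGm_meas _)) ((mg P _).indicator measurableSet_Ioo)
        (sub_wb P (bG P _) (bGm P _)) measurableSet_Ioo
        (fun y => ind_wb2 P (bg P (((zn n) : ℝ) : EReal)) hcpos.le y)
        (fun y => decompGm P (hzn n) y) hp.1 hp.2
    have h0 : Tendsto (fun n => P.Gp p ↑(zn n) - P.Gmp p ↑z₀) atTop (𝓝 0) :=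
      squeeze_zero_norm hbnd huc
    have := h0.add (tendsto_const_nhds (x := P.Gmp p ↑z₀))
    simpa using this


lemma sandwich_m (h1 : P.PCLI1) (h2m : Monotone P.mStar) (h2c : Continuous P.mStar)
    (h3 : P.PCLI3) {p : Measure ℝ} (hp : P.IsInitDist p) {z z₀ : ℝ} (hz : z < z₀) :
    P.mStar z * (P.Gp p ↑z - P.Gmp p ↑z₀) ≤ P.Fp p ↑z - P.Fmp p ↑z₀ ∧
    P.Fp p ↑z - P.Fmp p ↑z₀ ≤ P.mStar z₀ * (P.Gp p ↑z - P.Gmp p ↑z₀) := by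
  set zn : ℕ → ℝ := fun n => z₀ - (z₀ - z)/(n+2) with hznd
  have hzn1 : ∀ n, z < zn n := by
    intro n
    have h2 : (z₀ - z)/((n:ℝ)+2) < z₀ - z := by
      apply div_lt_self (by linarith)
      have : (0:ℝ) ≤ (n:ℝ) := Nat.cast_nonneg n
      linarith
    simp only [hznd]
    linarith
  have hzn2 : ∀ n, zn n < z₀ := by
    intro n
    have hpos : 0 < (z₀ - z)/((n:ℝ)+2) := by
      apply div_pos (by linarith)
      have : (0:ℝ) ≤ (n:ℝ) := Nat.cast_nonneg n
      linarith
    simp only [hznd]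
    linarith
  have hznlim : Tendsto zn atTop (𝓝 z₀) := by
    have h2 : Tendsto (fun n : ℕ => ((n:ℝ)+2)) atTop atTop :=
      tendsto_atTop_add_const_right atTop 2 tendsto_natCast_atTop_atTop
    have h3' : Tendsto (fun n : ℕ => (z₀ - z)/((n:ℝ)+2)) atTop (𝓝 0) :=
      h2.const_div_atTop (z₀ - z)
    have h4 := (tendsto_const_nhds (x := z₀) (f := (atTop : Filter ℕ))).sub h3'
    simpa [hznd] using h4
  obtain ⟨hFlim, hGlim⟩ := tend_to_m P h1 hp z₀ hzn2 hznlim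
  have hmlim : Tendsto (fun n => P.mStar (zn n)) atTop (𝓝 (P.mStar z₀)) :=
    (h2c.tendsto z₀).comp hznlim
  have hs : ∀ n, P.mStar z * (P.Gp p ↑z - P.Gp p ↑(zn n)) ≤ P.Fp p ↑z - P.Fp p ↑(zn n) ∧
      P.Fp p ↑z - P.Fp p ↑(zn n) ≤ P.mStar (zn n) * (P.Gp p ↑z - P.Gp p ↑(zn n)) :=
    fun n => sandwich_p P h1 h2m h3 hp (hzn1 n)
  have tG : Tendsto (fun n => P.Gp p ↑z - P.Gp p ↑(zn n)) atTop
      (𝓝 (P.Gp p ↑z - P.Gmp p ↑z₀)) := tendsto_const_nhds.sub hGlim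
  have tF : Tendsto (fun n => P.Fp p ↑z - P.Fp p ↑(zn n)) atTop
      (𝓝 (P.Fp p ↑z - P.Fmp p ↑z₀)) := tendsto_const_nhds.sub hFlim
  constructor
  · exact le_of_tendsto_of_tendsto' (tG.const_mul _) tF (fun n => (hs n).1)
  · exact le_of_tendsto_of_tendsto' tF (hmlim.mul tG) (fun n => (hs n).2)

lemma div_shift {num den m : ℝ} (h : den ≠ 0) : num/den - m = (num - m*den)/den := by
  field_simp

lemma ratio_abs {num den a b : ℝ} (hden : 0 < den)
    (h1 : a * den ≤ num) (h2 : num ≤ b * den) : |num/den - b| ≤ |a - b| := by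
  have hub : num/den ≤ b := by
    rw [div_le_iff₀ hden]
    linarith [h2]
  have hlb : a ≤ num/den := by
    rw [le_div_iff₀ hden]
    linarith [h1]
  rw [abs_le]
  constructor
  · have := neg_abs_le (a - b)
    linarith
  · have := abs_nonneg (a - b)
    linarith

lemma ratio_abs' {num den a b : ℝ} (hden : 0 < den)
    (h1 : a * den ≤ num) (h2 : num ≤ b * den) : |num/den - a| ≤ |b - a| := by
  have hub : num/den ≤ b := by
    rw [div_le_iff₀ hden]
    linarith [h2]
  have hlb : a ≤ num/den := by
    rw [le_div_iff₀ hden]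
    linarith [h1]
  rw [abs_le]
  constructor
  · have := abs_nonneg (b - a)
    linarith
  · have := le_abs_self (b - a)
    linarith


end BL

end AuxProof
/-- Under PCL-indexability and full support of `p`, the MP index is the
derivative of `F(p,·)` with respect to `G(p,·)`. -/
theorem mpIndex_as_derivative (P : Bandit) (h : P.PCLIndexable)
    (p : Measure ℝ) (hp : P.IsInitDist p)
    (hsupp : ∀ s : Set ℝ, IsOpen s → s.Nonempty → 0 < p s) (z₀ : ℝ) :
    Filter.Tendsto
      (fun z : ℝ => (P.Fp p z - P.Fp p z₀) / (P.Gp p z - P.Gp p z₀))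
      (nhdsWithin z₀ {z₀}ᶜ) (nhds (P.mStar z₀)) ∧
    Filter.Tendsto
      (fun z : ℝ => (P.Fp p z - P.Fmp p z₀) / (P.Gp p z - P.Gmp p z₀))
      (nhdsWithin z₀ {z₀}ᶜ) (nhds (P.mStar z₀)) := by
  obtain ⟨h1, ⟨hmono, hcont, _⟩, h3⟩ := h
  have key : ∀ z : ℝ, z ≠ z₀ →
      |(P.Fp p ↑z - P.Fp p ↑z₀) / (P.Gp p ↑z - P.Gp p ↑z₀) - P.mStar z₀|
        ≤ |P.mStar z - P.mStar z₀| ∧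
      |(P.Fp p ↑z - P.Fmp p ↑z₀) / (P.Gp p ↑z - P.Gmp p ↑z₀) - P.mStar z₀|
        ≤ |P.mStar z - P.mStar z₀| := by
    intro z hzne
    rcases lt_or_gt_of_ne hzne with hlt | hgt
    · -- z < z₀
      have hΔ : 0 < P.Gp p ↑z - P.Gp p ↑z₀ := BL.Gp_strict P h1 hp hsupp hlt
      have hs := BL.sandwich_p P h1 hmono h3 hp hlt
      constructor
      · exact BL.ratio_abs hΔ hs.1 hs.2
      · have hd := BL.GpGmp_pos P h1 hp hsupp hlt
        have hsm := BL.sandwich_m P h1 hmono hcont h3 hp hlt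
        exact BL.ratio_abs hd hsm.1 hsm.2
    · -- z₀ < z
      have hΔ : 0 < P.Gp p ↑z₀ - P.Gp p ↑z := BL.Gp_strict P h1 hp hsupp hgt
      have hs := BL.sandwich_p P h1 hmono h3 hp hgt
      have hmm : P.mStar z₀ ≤ P.mStar z := hmono hgt.le
      constructor
      · have heqr : (P.Fp p ↑z - P.Fp p ↑z₀) / (P.Gp p ↑z - P.Gp p ↑z₀)
            = (P.Fp p ↑z₀ - P.Fp p ↑z) / (P.Gp p ↑z₀ - P.Gp p ↑z) := by
          rw [← neg_div_neg_eq]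
          ring_nf
        rw [heqr]
        exact BL.ratio_abs' hΔ hs.1 hs.2
      · -- ratio 2 for z > z₀
        have hb0 : 0 ≤ P.Gmp p ↑z₀ - P.Gp p ↑z₀ := by
          have e : P.Gmp p ↑z₀ - P.Gp p ↑z₀ = ∫ x, (P.Gm x ↑z₀ - P.G x ↑z₀) ∂p := by
            unfold Bandit.Gp Bandit.Gmp
            rw [integral_sub (BL.intGm P p hp _) (BL.intG P p hp _)]
          rw [e]
          exact integral_nonneg (BL.Gm_ge P h1 z₀)
        have hprop : P.Fp p ↑z₀ - P.Fmp p ↑z₀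
            = P.mStar z₀ * (P.Gp p ↑z₀ - P.Gmp p ↑z₀) := by
          have e : P.Fp p ↑z₀ - P.Fmp p ↑z₀ = ∫ x, (P.F x ↑z₀ - P.Fm x ↑z₀) ∂p := by
            unfold Bandit.Fp Bandit.Fmp
            rw [integral_sub (BL.intF P p hp _) (BL.intFm P p hp _)]
          have e2 : P.mStar z₀ * (P.Gp p ↑z₀ - P.Gmp p ↑z₀)
              = ∫ x, P.mStar z₀ * (P.G x ↑z₀ - P.Gm x ↑z₀) ∂p := by
            unfold Bandit.Gp Bandit.Gmp
            rw [integral_const_mul, integral_sub (BL.intG P p hp _) (BL.intGm P p hp _)]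
          rw [e, e2]
          exact integral_congr_ae (ae_of_all _ fun x => BL.propor P h1 z₀ x)
        set Δ' := P.Gp p ↑z₀ - P.Gp p ↑z with hΔ'd
        set b := P.Gmp p ↑z₀ - P.Gp p ↑z₀ with hbd
        have hsum : 0 < Δ' + b := by linarith
        have hden : P.Gp p ↑z - P.Gmp p ↑z₀ = -(Δ' + b) := by
          rw [hΔ'd, hbd]; ring
        have hnum : P.Fp p ↑z - P.Fmp p ↑z₀
            = (P.Fp p ↑z - P.Fp p ↑z₀) - P.mStar z₀ * b := by
          have : P.Fmp p ↑z₀ = P.Fp p ↑z₀ + P.mStar z₀ * b := by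
            rw [hbd]
            nlinarith [hprop]
          rw [this]; ring
        have hkey : (P.Fp p ↑z - P.Fmp p ↑z₀) / (P.Gp p ↑z - P.Gmp p ↑z₀) - P.mStar z₀
            = ((P.Fp p ↑z₀ - P.Fp p ↑z) - P.mStar z₀ * Δ') / (Δ' + b) := by
          rw [BL.div_shift (by rw [hden]; exact neg_ne_zero.mpr (ne_of_gt hsum)), hden, hnum,
            show (P.Fp p ↑z - P.Fp p ↑z₀ - P.mStar z₀ * b) - P.mStar z₀ * -(Δ' + b)
              = -((P.Fp p ↑z₀ - P.Fp p ↑z) - P.mStar z₀ * Δ') from by ring,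
            show -(Δ' + b) = -(Δ' + b) from rfl]
          rw [neg_div_neg_eq]
        rw [hkey, abs_le]
        have hn1 : 0 ≤ (P.Fp p ↑z₀ - P.Fp p ↑z) - P.mStar z₀ * Δ' := by
          have := hs.1
          linarith
        have hn2 : (P.Fp p ↑z₀ - P.Fp p ↑z) - P.mStar z₀ * Δ'
            ≤ (P.mStar z - P.mStar z₀) * Δ' := by
          have := hs.2
          linarith
        constructor
        · have hge : 0 ≤ ((P.Fp p ↑z₀ - P.Fp p ↑z) - P.mStar z₀ * Δ') / (Δ' + b) :=
            div_nonneg hn1 hsum.le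
          have := neg_abs_le (P.mStar z - P.mStar z₀)
          have habs0 := abs_nonneg (P.mStar z - P.mStar z₀)
          linarith
        · have hle : ((P.Fp p ↑z₀ - P.Fp p ↑z) - P.mStar z₀ * Δ') / (Δ' + b)
              ≤ P.mStar z - P.mStar z₀ := by
            rw [div_le_iff₀ hsum]
            nlinarith [hmm, hb0]
          have := le_abs_self (P.mStar z - P.mStar z₀)
          linarith
  have hmtend : Tendsto (fun z => |P.mStar z - P.mStar z₀|) (nhdsWithin z₀ {z₀}ᶜ) (𝓝 0) := by
    have h0 : Tendsto P.mStar (nhdsWithin z₀ {z₀}ᶜ) (𝓝 (P.mStar z₀)) :=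
      (hcont.tendsto z₀).mono_left nhdsWithin_le_nhds
    have h1' := (h0.sub (tendsto_const_nhds (x := P.mStar z₀))).abs
    simpa using h1'
  constructor
  · rw [tendsto_iff_dist_tendsto_zero]
    refine squeeze_zero' (Eventually.of_forall fun z => dist_nonneg) ?_ hmtend
    filter_upwards [self_mem_nhdsWithin] with z hz
    rw [Real.dist_eq]
    exact (key z hz).1
  · rw [tendsto_iff_dist_tendsto_zero]
    refine squeeze_zero' (Eventually.of_forall fun z => dist_nonneg) ?_ hmtend
    filter_upwards [self_mem_nhdsWithin] with z hz
    rw [Real.dist_eq]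
    exact (key z hz).2
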